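/- Let D=(N,A,s,t) be an acyclic network and a an arc of A. The inequality x(a) ≥ 0 defines a facet of the flow polytope F(D) if and only if a belongs to at least one s–t path and, moreover, either D has exactly one s–t path, or the arc a is good (i.e., a lies on a corridor (u_1,u_2),...,(u_{m-1},u_m) with d̃⁺(u_1) ≥ 2 and d̃⁻(u_m) ≥ 2). -/

import Mathlib

open scoped Classical

variable {V : Type*} [Fintype V] [DecidableEq V]

/-- A directed graph (arc set `A`) is acyclic: no directed cycle. -/
def Acyclic (A : Finset (V × V)) : Prop :=
  ∀ v : V, ¬ Relation.TransGen (fun u w => (u, w) ∈ A) v v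

/-- Sum of `x` over the arcs of `A` with tail `v`. -/
noncomputable def outSum (A : Finset (V × V)) (x : V × V → ℝ) (v : V) : ℝ :=
  ∑ a ∈ A.filter (fun a => a.1 = v), x a

/-- Sum of `x` over the arcs of `A` with head `v`. -/
noncomputable def inSum (A : Finset (V × V)) (x : V × V → ℝ) (v : V) : ℝ :=
  ∑ a ∈ A.filter (fun a => a.2 = v), x a

/-- A flow of value 1 in the network `(V, A, s, t)`. -/
def IsFlow (A : Finset (V × V)) (s t : V) (x : V × V → ℝ) : Prop :=
  (∀ a, a ∉ A → x a = 0) ∧ (∀ a, 0 ≤ x a) ∧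
    (∀ v, v ≠ s → v ≠ t → outSum A x v = inSum A x v) ∧
    outSum A x s - inSum A x s = 1

/-- The flow polytope: all value-1 flows, as a subset of `ℝ^(V × V)`. -/
def flowPolytope (A : Finset (V × V)) (s t : V) : Set ((V × V) → ℝ) :=
  {x | IsFlow A s t x}

/-- An `s`–`t` path, given by its list of nodes. -/
def IsPath (A : Finset (V × V)) (s t : V) (p : List V) : Prop :=
  p.Chain' (fun u v => (u, v) ∈ A) ∧ p.head? = some s ∧ p.getLast? = some t ∧ p.Nodup

/-- The arcs of a path given by its node list. -/
def pathEdges (p : List V) : List (V × V) := p.zip p.tail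

/-- Characteristic vector of (the arc set of) a path. -/
def chi (p : List V) : (V × V) → ℝ := fun a => if a ∈ pathEdges p then 1 else 0

/-- Arcs lying on at least one `s`–`t` path (the arc set of the reduced network). -/
noncomputable def redArcs (A : Finset (V × V)) (s t : V) : Finset (V × V) :=
  A.filter fun a => ∃ p : List V, IsPath A s t p ∧ a ∈ pathEdges p

/-- Nodes incident to an arc of the reduced network. -/
noncomputable def redNodes (A : Finset (V × V)) (s t : V) : Finset V :=
  (redArcs A s t).image Prod.fst ∪ (redArcs A s t).image Prod.snd

/-- Out-degree in the reduced network. -/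
noncomputable def dplus (A : Finset (V × V)) (s t : V) (u : V) : ℕ :=
  ((redArcs A s t).filter fun a => a.1 = u).card

/-- In-degree in the reduced network. -/
noncomputable def dminus (A : Finset (V × V)) (s t : V) (u : V) : ℕ :=
  ((redArcs A s t).filter fun a => a.2 = u).card

/-- A corridor: a maximal path of the reduced network all of whose internal nodes
have in- and out-degree 1 in the reduced network. -/
def IsCorridor (A : Finset (V × V)) (s t : V) (c : List V) : Prop :=
  2 ≤ c.length ∧ c.Chain' (fun u v => (u, v) ∈ redArcs A s t) ∧
    (∀ v ∈ c.tail.dropLast, dminus A s t v = 1 ∧ dplus A s t v = 1) ∧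
    (∀ h, c.head? = some h → dminus A s t h ≠ 1 ∨ dplus A s t h ≠ 1) ∧
    (∀ z, c.getLast? = some z → dminus A s t z ≠ 1 ∨ dplus A s t z ≠ 1)

/-- A good corridor. -/
def IsGoodCorridor (A : Finset (V × V)) (s t : V) (c : List V) : Prop :=
  IsCorridor A s t c ∧ (∀ h, c.head? = some h → 2 ≤ dplus A s t h) ∧
    (∀ z, c.getLast? = some z → 2 ≤ dminus A s t z)

/-- A good arc: an arc belonging to some good corridor. -/
def IsGoodArc (A : Finset (V × V)) (s t : V) (a : V × V) : Prop :=
  ∃ c, IsGoodCorridor A s t c ∧ a ∈ pathEdges c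

/-- Two vertices of a polytope `S` are adjacent when the segment joining them is a
(one-dimensional) face of `S`, i.e. an exposed face. -/
def AdjacentVerts (S : Set ((V × V) → ℝ)) (x y : (V × V) → ℝ) : Prop :=
  x ≠ y ∧ IsExposed ℝ S (segment ℝ x y)

/-- A facet: a proper maximal (exposed) face. -/
def IsFacetOf (S F : Set ((V × V) → ℝ)) : Prop :=
  IsExposed ℝ S F ∧ F ≠ S ∧ ∀ G, IsExposed ℝ S G → G ≠ S → F ⊆ G → G = F


set_option linter.unusedSectionVars false

section Part1
variable {A : Finset (V × V)} {s t : V}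

lemma pathEdges_nil : pathEdges ([] : List V) = [] := rfl
lemma pathEdges_single (x : V) : pathEdges [x] = [] := rfl
lemma pathEdges_cons₂ (x y : V) (l : List V) :
    pathEdges (x :: y :: l) = (x, y) :: pathEdges (y :: l) := rfl

lemma mem_pathEdges_iff : ∀ {p : List V} {e : V × V},
    e ∈ pathEdges p ↔ ∃ l1 l2, p = l1 ++ e.1 :: e.2 :: l2
  | [], e => by
      constructor
      · intro h; simp [pathEdges] at h
      · rintro ⟨l1, l2, h⟩; exact absurd h (by simp)
  | [x], e => by
      constructor
      · intro h; simp [pathEdges] at h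
      · rintro ⟨l1, l2, h⟩
        have := congrArg List.length h
        simp [List.length_append] at this
        omega
  | x :: y :: l, e => by
      rw [pathEdges_cons₂, List.mem_cons, mem_pathEdges_iff (p := y :: l)]
      constructor
      · rintro (rfl | ⟨l1, l2, h⟩)
        · exact ⟨[], l, rfl⟩
        · exact ⟨x :: l1, l2, by simp [h]⟩
      · rintro ⟨l1, l2, h⟩
        cases l1 with
        | nil =>
            left
            simp only [List.nil_append, List.cons.injEq] at h
            obtain ⟨h1, h2, _⟩ := h
            ext <;> simp [h1.symm, h2.symm]
        | cons z l1' =>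
            right
            simp only [List.cons_append, List.cons.injEq] at h
            exact ⟨l1', l2, h.2⟩

lemma edge_fst_mem {p : List V} {e : V × V} (h : e ∈ pathEdges p) : e.1 ∈ p := by
  obtain ⟨l1, l2, rfl⟩ := mem_pathEdges_iff.mp h
  simp

lemma edge_snd_mem {p : List V} {e : V × V} (h : e ∈ pathEdges p) : e.2 ∈ p := by
  obtain ⟨l1, l2, rfl⟩ := mem_pathEdges_iff.mp h
  simp

lemma eq_append_cons {v : V} : ∀ {l1 m1 r1 r2 : List V},
    l1 ++ v :: r1 = m1 ++ v :: r2 → v ∉ l1 → v ∉ m1 → l1 = m1 ∧ r1 = r2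
  | [], [], r1, r2 => by intro h _ _; simpa using h
  | [], m :: m1, r1, r2 => by
      intro h _ hm
      simp only [List.nil_append, List.cons_append, List.cons.injEq] at h
      exact absurd (h.1 ▸ List.mem_cons_self) hm
  | l :: l1, [], r1, r2 => by
      intro h hl _
      simp only [List.cons_append, List.nil_append, List.cons.injEq] at h
      exact absurd (h.1 ▸ List.mem_cons_self) hl
  | l :: l1, m :: m1, r1, r2 => by
      intro h hl hm
      simp only [List.cons_append, List.cons.injEq] at h
      obtain ⟨rfl, h2⟩ := h
      have := eq_append_cons h2 (fun hh => hl (List.mem_cons_of_mem _ hh))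
        (fun hh => hm (List.mem_cons_of_mem _ hh))
      exact ⟨by rw [this.1], this.2⟩

end Part1

section Part1b
variable {A : Finset (V × V)} {s t : V}

lemma mem_right_of_split {p l1 l2 : List V} (hnd : p.Nodup)
    (h : p = l1 ++ l2) : ∀ x ∈ l2, x ∉ l1 := by
  subst h
  intro x hx2 hx1
  exact (List.disjoint_of_nodup_append hnd) hx1 hx2

lemma edge_tail_unique {p : List V} {v w1 w2 : V} (hnd : p.Nodup)
    (h1 : (v, w1) ∈ pathEdges p) (h2 : (v, w2) ∈ pathEdges p) : w1 = w2 := by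
  obtain ⟨l1, r1, hp1⟩ := mem_pathEdges_iff.mp h1
  obtain ⟨l2, r2, hp2⟩ := mem_pathEdges_iff.mp h2
  simp only at hp1 hp2
  have hv1 : v ∉ l1 := mem_right_of_split hnd hp1 v (List.mem_cons_self)
  have hv2 : v ∉ l2 := mem_right_of_split hnd hp2 v (List.mem_cons_self)
  have := eq_append_cons (hp1 ▸ hp2 : l1 ++ v :: w1 :: r1 = l2 ++ v :: w2 :: r2) hv1 hv2
  exact (List.cons.injEq _ _ _ _ ▸ this.2).1

lemma edge_head_unique {p : List V} {u1 u2 v : V} (hnd : p.Nodup)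
    (h1 : (u1, v) ∈ pathEdges p) (h2 : (u2, v) ∈ pathEdges p) : u1 = u2 := by
  obtain ⟨l1, r1, hp1⟩ := mem_pathEdges_iff.mp h1
  obtain ⟨l2, r2, hp2⟩ := mem_pathEdges_iff.mp h2
  simp only at hp1 hp2
  rw [show l1 ++ u1 :: v :: r1 = (l1 ++ [u1]) ++ v :: r1 by simp] at hp1
  rw [show l2 ++ u2 :: v :: r2 = (l2 ++ [u2]) ++ v :: r2 by simp] at hp2
  have hv1 : v ∉ l1 ++ [u1] := mem_right_of_split hnd hp1 v (List.mem_cons_self)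
  have hv2 : v ∉ l2 ++ [u2] := mem_right_of_split hnd hp2 v (List.mem_cons_self)
  have heq := (eq_append_cons (hp1 ▸ hp2 : (l1 ++ [u1]) ++ v :: r1 = (l2 ++ [u2]) ++ v :: r2)
    hv1 hv2).1
  have := congrArg List.getLast? heq
  rw [List.getLast?_concat, List.getLast?_concat] at this
  exact Option.some.inj this

lemma last_no_out {p : List V} {z w : V} (hnd : p.Nodup)
    (hl : p.getLast? = some z) (h : (z, w) ∈ pathEdges p) : False := by
  obtain ⟨l1, r1, hp⟩ := mem_pathEdges_iff.mp h
  simp only at hp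
  subst hp
  rw [List.getLast?_append_cons, List.getLast?_cons_cons] at hl
  obtain ⟨hne, hlast⟩ := List.mem_getLast?_eq_getLast (show z ∈ (w :: r1).getLast? from hl ▸ rfl)
  have hzmem : z ∈ w :: r1 := hlast ▸ List.getLast_mem hne
  have hnd2 : (z :: w :: r1).Nodup := (List.nodup_append.mp hnd).2.1
  exact (List.nodup_cons.mp hnd2).1 hzmem

lemma head_no_in {p : List V} {b u : V} (hnd : p.Nodup)
    (hh : p.head? = some b) (he : (u, b) ∈ pathEdges p) : False := by
  obtain ⟨l1, r1, hp⟩ := mem_pathEdges_iff.mp he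
  simp only at hp
  subst hp
  have hmem : b ∈ u :: b :: r1 := List.mem_cons_of_mem _ (List.mem_cons_self)
  cases l1 with
  | nil =>
      simp only [List.nil_append, List.head?_cons, Option.some.injEq] at hh
      subst hh
      simp at hnd
  | cons a l1' =>
      simp only [List.cons_append, List.head?_cons, Option.some.injEq] at hh
      subst hh
      exact (List.nodup_cons.mp hnd).1 (List.mem_append_right _ hmem)

lemma exists_out_edge : ∀ {p : List V} {z v : V}, p.getLast? = some z → v ∈ p → v ≠ z →
    ∃ w, (v, w) ∈ pathEdges p
  | [], z, v => by simp
  | [x], z, v => by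
      intro hl hv hne
      simp only [List.getLast?_singleton, Option.some.injEq] at hl
      simp only [List.mem_singleton] at hv
      exact absurd (hv.trans hl) hne
  | x :: y :: l, z, v => by
      intro hl hv hne
      rcases List.mem_cons.mp hv with rfl | hv'
      · exact ⟨y, by simp [pathEdges_cons₂]⟩
      · have hl' : (y :: l).getLast? = some z := by rwa [List.getLast?_cons_cons] at hl
        obtain ⟨w, hw⟩ := exists_out_edge hl' hv' hne
        exact ⟨w, by rw [pathEdges_cons₂]; exact List.mem_cons_of_mem _ hw⟩

lemma exists_in_edge : ∀ {p : List V} {h v : V}, p.head? = some h → v ∈ p → v ≠ h →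
    ∃ u, (u, v) ∈ pathEdges p
  | [], h, v => by simp
  | x :: l, h, v => by
      intro hh hv hne
      simp only [List.head?_cons, Option.some.injEq] at hh
      subst hh
      rcases List.mem_cons.mp hv with rfl | hv'
      · exact absurd rfl hne
      · cases l with
        | nil => simp at hv'
        | cons y l' =>
            by_cases hvy : v = y
            · subst hvy
              exact ⟨x, by simp [pathEdges_cons₂]⟩
            · obtain ⟨u, hu⟩ := exists_in_edge (p := y :: l') rfl hv' hvy
              exact ⟨u, by rw [pathEdges_cons₂]; exact List.mem_cons_of_mem _ hu⟩

end Part1b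

section Part1c
variable {A : Finset (V × V)} {s t u z v x : V} {p q r : List V} {e : V × V}

lemma rtg_ne_tg {R : V → V → Prop} {a b : V} (h : Relation.ReflTransGen R a b) (hne : a ≠ b) :
    Relation.TransGen R a b := by
  rcases (Relation.reflTransGen_iff_eq_or_transGen.mp h) with h' | h'
  · exact absurd h'.symm hne
  · exact h'

lemma chain'_rtg {R : V → V → Prop} : ∀ {c : List V} {h x : V}, c.Chain' R → c.head? = some h →
    x ∈ c → Relation.ReflTransGen R h x
  | [], h, x => by simp
  | a :: l, h, x => by
      intro hc hh hx
      simp only [List.head?_cons, Option.some.injEq] at hh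
      subst hh
      rcases List.mem_cons.mp hx with rfl | hx'
      · exact Relation.ReflTransGen.refl
      · cases l with
        | nil => simp at hx'
        | cons b l' =>
            have hR := (List.isChain_cons_cons.mp hc).1
            exact (Relation.ReflTransGen.single hR).trans
              (chain'_rtg (List.isChain_cons_cons.mp hc).2 rfl hx')

lemma chain'_rtg_last {R : V → V → Prop} : ∀ {c : List V} {z x : V}, c.Chain' R →
    c.getLast? = some z → x ∈ c → Relation.ReflTransGen R x z
  | [], z, x => by simp
  | a :: l, z, x => by
      intro hc hl hx
      cases l with
      | nil =>
          simp only [List.getLast?_singleton, Option.some.injEq] at hl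
          simp only [List.mem_singleton] at hx
          subst hl; subst hx
          exact Relation.ReflTransGen.refl
      | cons b l' =>
          rw [List.getLast?_cons_cons] at hl
          have hR := (List.isChain_cons_cons.mp hc).1
          have htail := chain'_rtg_last (x := b) (List.isChain_cons_cons.mp hc).2 hl
            (List.mem_cons_self)
          rcases List.mem_cons.mp hx with rfl | hx'
          · exact (Relation.ReflTransGen.single hR).trans htail
          · exact chain'_rtg_last (List.isChain_cons_cons.mp hc).2 hl hx'

lemma IsPath.ne_nil (hp : IsPath A u z p) : p ≠ [] := by
  intro h; subst h; simp [IsPath] at hp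

lemma IsPath.head_mem (hp : IsPath A u z p) : u ∈ p := by
  cases p with
  | nil => exact absurd rfl hp.ne_nil
  | cons a l =>
    have : a = u := by simpa using hp.2.1
    exact this ▸ List.mem_cons_self

lemma IsPath.last_mem (hp : IsPath A u z p) : z ∈ p := by
  obtain ⟨hne, hlast⟩ := List.mem_getLast?_eq_getLast (show z ∈ p.getLast? from hp.2.2.1 ▸ rfl)
  exact hlast ▸ List.getLast_mem hne

lemma chain'_pair {R : V → V → Prop} (hc : p.Chain' R) (he : e ∈ pathEdges p) : R e.1 e.2 := by
  obtain ⟨l1, l2, rfl⟩ := mem_pathEdges_iff.mp he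
  have hinf : [e.1, e.2] <:+: (l1 ++ e.1 :: e.2 :: l2) := ⟨l1, l2, by simp⟩
  have := hc.infix hinf
  exact (List.isChain_cons_cons.mp this).1

lemma IsPath.edges_mem (hp : IsPath A u z p) (he : e ∈ pathEdges p) : e ∈ A :=
  chain'_pair hp.1 he

lemma path_rtg_head (hp : IsPath A u z p) (hx : x ∈ p) :
    Relation.ReflTransGen (fun a b => (a, b) ∈ A) u x := chain'_rtg hp.1 hp.2.1 hx

lemma path_rtg_last (hp : IsPath A u z p) (hx : x ∈ p) :
    Relation.ReflTransGen (fun a b => (a, b) ∈ A) x z := chain'_rtg_last hp.1 hp.2.2.1 hx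

lemma path_single : IsPath A u u [u] := ⟨List.isChain_singleton _, rfl, rfl, by simp⟩

lemma path_tail {y : V} {l : List V} (hp : IsPath A u z (x :: y :: l)) : IsPath A y z (y :: l) :=
  ⟨(List.isChain_cons_cons.mp hp.1).2, rfl, by rw [← List.getLast?_cons_cons (a := x)]; exact hp.2.2.1,
    (List.nodup_cons.mp hp.2.2.2).2⟩

lemma IsPath.head_cons (hp : IsPath A u z p) : ∃ l, p = u :: l := by
  cases p with
  | nil => exact absurd rfl hp.ne_nil
  | cons a l =>
    have : a = u := by simpa using hp.2.1
    exact ⟨l, by rw [this]⟩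

lemma acyclic_no_loop (hA : Acyclic A) : (v, v) ∉ A := fun h =>
  hA v (Relation.TransGen.single h)

lemma getLast?_cons_of_ne_nil {a : V} {l : List V} (hl : l ≠ []) :
    (a :: l).getLast? = l.getLast? := by
  cases l with
  | nil => exact absurd rfl hl
  | cons b l' => exact List.getLast?_cons_cons ..

lemma pathEdges_cons_head {a h : V} {l : List V} (hh : l.head? = some h) :
    pathEdges (a :: l) = (a, h) :: pathEdges l := by
  cases l with
  | nil => simp at hh
  | cons b l' =>
    simp only [List.head?_cons, Option.some.injEq] at hh
    rw [← hh, pathEdges_cons₂]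

lemma pathEdges_append_eq : ∀ {q : List V} {v : V} (l : List V), q.getLast? = some v →
    pathEdges (q ++ l) = pathEdges q ++ pathEdges (v :: l)
  | [], v, l => by simp
  | [x], v, l => by
      intro hl
      simp only [List.getLast?_singleton, Option.some.injEq] at hl
      subst hl
      simp [pathEdges_single]
  | x :: y :: q', v, l => by
      intro hl
      rw [List.getLast?_cons_cons] at hl
      have ih := pathEdges_append_eq (q := y :: q') l hl
      show pathEdges (x :: ((y :: q') ++ l)) = pathEdges (x :: y :: q') ++ pathEdges (v :: l)
      rw [pathEdges_cons_head (show ((y :: q') ++ l).head? = some y from rfl), ih,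
        pathEdges_cons₂]
      rfl

lemma path_append (hA : Acyclic A) (hq : IsPath A u v q) (hr : IsPath A v z r) :
    IsPath A u z (q ++ r.tail) ∧ pathEdges (q ++ r.tail) = pathEdges q ++ pathEdges r := by
  obtain ⟨r', rfl⟩ := hr.head_cons
  have htail : (v :: r').tail = r' := rfl
  rw [htail]
  have hedges : pathEdges (q ++ r') = pathEdges q ++ pathEdges (v :: r') :=
    pathEdges_append_eq r' hq.2.2.1
  refine ⟨⟨?_, ?_, ?_, ?_⟩, hedges⟩
  · refine List.IsChain.append hq.1 ((List.isChain_cons.mp hr.1).2) ?_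
    intro a ha b hb
    have hav : a = v := by
      have := hq.2.2.1
      rw [this] at ha; exact (Option.some.inj ha.symm).symm ▸ rfl
    subst hav
    exact (List.isChain_cons.mp hr.1).1 b hb
  · obtain ⟨l, rfl⟩ := hq.head_cons
    simp
  · cases r' with
    | nil =>
        have : v = z := by simpa using hr.2.2.1
        rw [List.append_nil, ← this]; exact hq.2.2.1
    | cons b l' =>
        rw [List.getLast?_append_of_ne_nil _ (by simp)]
        rw [← List.getLast?_cons_cons (a := v)]
        exact hr.2.2.1
  · rw [List.nodup_append]
    refine ⟨hq.2.2.2, (List.nodup_cons.mp hr.2.2.2).2, ?_⟩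
    intro a ha a' ha' hab
    subst hab
    have h1 : Relation.ReflTransGen (fun a b => (a, b) ∈ A) a v := path_rtg_last hq ha
    have h2 : Relation.ReflTransGen (fun a b => (a, b) ∈ A) v a :=
      path_rtg_head hr (List.mem_cons_of_mem _ ha')
    have hav : v ≠ a := by
      rintro rfl
      exact (List.nodup_cons.mp hr.2.2.2).1 ha'
    exact hA v (Relation.TransGen.trans_left (rtg_ne_tg h2 hav) h1)

lemma path_split : ∀ {p : List V} {u z v : V}, IsPath A u z p → v ∈ p →
    ∃ q r, IsPath A u v q ∧ IsPath A v z r ∧ p = q ++ r.tail ∧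
      pathEdges p = pathEdges q ++ pathEdges r
  | [], u, z, v => by simp
  | x :: l, u, z, v => by
      intro hp hv
      have hx : x = u := by simpa using hp.2.1
      subst hx
      rcases List.mem_cons.mp hv with rfl | hv'
      · exact ⟨[v], v :: l, path_single, hp, rfl, by simp [pathEdges_single]⟩
      · cases l with
        | nil => simp at hv'
        | cons y l' =>
            obtain ⟨q', r, hq', hr, heq, hedges⟩ := path_split (path_tail hp) hv'
            have hq'nn : q' ≠ [] := hq'.ne_nil
            have hq'h : q'.head? = some y := hq'.2.1
            refine ⟨x :: q', r, ⟨?_, rfl, ?_, ?_⟩, hr, ?_, ?_⟩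
            · simp only [List.Chain', List.isChain_cons]
              exact ⟨fun b hb => by
                rw [hq'h] at hb
                exact (Option.some.inj hb) ▸ (List.isChain_cons_cons.mp hp.1).1, hq'.1⟩
            · rw [getLast?_cons_of_ne_nil hq'nn]; exact hq'.2.2.1
            · rw [List.nodup_cons]
              refine ⟨fun hx' => ?_, hq'.2.2.2⟩
              have : x ∈ y :: l' := heq ▸ List.mem_append_left _ hx'
              exact (List.nodup_cons.mp hp.2.2.2).1 this
            · rw [List.cons_append, heq]
            · rw [pathEdges_cons_head (show (y :: l').head? = some y from rfl), hedges,
                pathEdges_cons_head hq'h]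
              rfl

lemma pathEdges_nodup : ∀ {p : List V}, p.Nodup → (pathEdges p).Nodup
  | [] => by simp [pathEdges_nil]
  | [x] => by simp [pathEdges_single]
  | x :: y :: l => by
      intro hnd
      rw [pathEdges_cons₂, List.nodup_cons]
      refine ⟨fun h => ?_, pathEdges_nodup (List.nodup_cons.mp hnd).2⟩
      exact (List.nodup_cons.mp hnd).1 (edge_fst_mem h)

lemma chi_add_of_split {p q r : List V} (hnd : p.Nodup)
    (heq : pathEdges p = pathEdges q ++ pathEdges r) : chi p = chi q + chi r := by
  funext e
  have hndE : (pathEdges q ++ pathEdges r).Nodup := heq ▸ pathEdges_nodup hnd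
  have hdisj := List.disjoint_of_nodup_append hndE
  simp only [chi, heq, Pi.add_apply, List.mem_append]
  by_cases h1 : e ∈ pathEdges q
  · rw [if_pos (Or.inl h1), if_pos h1, if_neg (hdisj h1)]; ring
  · by_cases h2 : e ∈ pathEdges r
    · rw [if_pos (Or.inr h2), if_neg h1, if_pos h2]; ring
    · rw [if_neg (by tauto), if_neg h1, if_neg h2]; ring

end Part1c

section Part2
variable {A : Finset (V × V)} {s t : V} {p : List V}

lemma sum_out_in (A : Finset (V × V)) (x : V × V → ℝ) :
    ∑ v : V, (outSum A x v - inSum A x v) = 0 := by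
  rw [Finset.sum_sub_distrib]
  have h1 : ∑ v : V, outSum A x v = ∑ e ∈ A, x e :=
    Finset.sum_fiberwise_of_maps_to (fun e _ => Finset.mem_univ e.1) x
  have h2 : ∑ v : V, inSum A x v = ∑ e ∈ A, x e :=
    Finset.sum_fiberwise_of_maps_to (fun e _ => Finset.mem_univ e.2) x
  rw [h1, h2, sub_self]

lemma flow_balance {x : V × V → ℝ} (hx : IsFlow A s t x) :
    s ≠ t ∧ outSum A x t - inSum A x t = -1 := by
  classical
  set f := fun v => outSum A x v - inSum A x v with hf
  have h0 : ∑ v : V, f v = 0 := sum_out_in A x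
  have hz : ∀ v ∈ Finset.univ, v ∉ ({s, t} : Finset V) → f v = 0 := by
    intro v _ hv
    simp only [Finset.mem_insert, Finset.mem_singleton, not_or] at hv
    have := hx.2.2.1 v hv.1 hv.2
    simp [hf, this]
  have hsum : ∑ v ∈ ({s, t} : Finset V), f v = 0 := by
    rw [← h0]
    exact Finset.sum_subset (Finset.subset_univ _) hz
  by_cases hst : s = t
  · subst hst
    simp only [Finset.insert_idem, Finset.insert_eq_self.mpr (Finset.mem_singleton_self s),
      Finset.sum_singleton] at hsum
    rw [hf] at hsum
    simp only at hsum
    rw [hx.2.2.2] at hsum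
    norm_num at hsum
  · constructor
    · exact hst
    · rw [Finset.sum_pair hst] at hsum
      have : f s = 1 := hx.2.2.2
      have : f t = -1 := by linarith [hsum, this]
      exact this

lemma outSum_chi (hp : IsPath A s t p) (v : V) :
    outSum A (chi p) v = if ∃ w, (v, w) ∈ pathEdges p then 1 else 0 := by
  classical
  have hcard : outSum A (chi p) v =
      ((A.filter (fun e => e.1 = v)).filter (fun e => e ∈ pathEdges p)).card := by
    rw [outSum]; simp only [chi]; rw [Finset.sum_boole]
  rw [hcard]
  by_cases h : ∃ w, (v, w) ∈ pathEdges p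
  · obtain ⟨w, hw⟩ := h
    rw [if_pos ⟨w, hw⟩]
    have : (A.filter (fun e => e.1 = v)).filter (fun e => e ∈ pathEdges p) = {(v, w)} := by
      ext e
      simp only [Finset.mem_filter, Finset.mem_singleton]
      constructor
      · rintro ⟨⟨heA, he1⟩, he2⟩
        obtain ⟨e1, e2⟩ := e
        simp only at he1 he2 ⊢
        subst he1
        rw [edge_tail_unique hp.2.2.2 he2 hw]
      · rintro rfl
        exact ⟨⟨hp.edges_mem hw, rfl⟩, hw⟩
    rw [this, Finset.card_singleton, Nat.cast_one]
  · rw [if_neg h]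
    have : (A.filter (fun e => e.1 = v)).filter (fun e => e ∈ pathEdges p) = ∅ := by
      ext e
      simp only [Finset.mem_filter, Finset.notMem_empty, iff_false, not_and]
      rintro ⟨heA, he1⟩ he2
      exact h ⟨e.2, by rw [← he1]; exact he2⟩
    rw [this, Finset.card_empty, Nat.cast_zero]

lemma inSum_chi (hp : IsPath A s t p) (v : V) :
    inSum A (chi p) v = if ∃ u, (u, v) ∈ pathEdges p then 1 else 0 := by
  classical
  have hcard : inSum A (chi p) v =
      ((A.filter (fun e => e.2 = v)).filter (fun e => e ∈ pathEdges p)).card := by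
    rw [inSum]; simp only [chi]; rw [Finset.sum_boole]
  rw [hcard]
  by_cases h : ∃ u, (u, v) ∈ pathEdges p
  · obtain ⟨u, hu⟩ := h
    rw [if_pos ⟨u, hu⟩]
    have : (A.filter (fun e => e.2 = v)).filter (fun e => e ∈ pathEdges p) = {(u, v)} := by
      ext e
      simp only [Finset.mem_filter, Finset.mem_singleton]
      constructor
      · rintro ⟨⟨heA, he2⟩, hee⟩
        obtain ⟨e1, e2⟩ := e
        simp only at he2 hee ⊢
        subst he2
        rw [edge_head_unique hp.2.2.2 hee hu]
      · rintro rfl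
        exact ⟨⟨hp.edges_mem hu, rfl⟩, hu⟩
    rw [this, Finset.card_singleton, Nat.cast_one]
  · rw [if_neg h]
    have : (A.filter (fun e => e.2 = v)).filter (fun e => e ∈ pathEdges p) = ∅ := by
      ext e
      simp only [Finset.mem_filter, Finset.notMem_empty, iff_false, not_and]
      rintro ⟨heA, he2⟩ hee
      exact h ⟨e.1, by rw [← he2]; exact hee⟩
    rw [this, Finset.card_empty, Nat.cast_zero]

lemma chi_flow (hp : IsPath A s t p) (hst : s ≠ t) : IsFlow A s t (chi p) := by
  refine ⟨fun e he => ?_, fun e => ?_, fun v hvs hvt => ?_, ?_⟩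
  · rw [chi, if_neg (fun hmem => he (hp.edges_mem hmem))]
  · rw [chi]; split <;> norm_num
  · rw [outSum_chi hp, inSum_chi hp]
    refine if_congr ⟨fun ⟨w, hw⟩ => ?_, fun ⟨u, hu⟩ => ?_⟩ rfl rfl
    · exact exists_in_edge hp.2.1 (edge_fst_mem hw) hvs
    · exact exists_out_edge hp.2.2.1 (edge_snd_mem hu) hvt
  · rw [outSum_chi hp, inSum_chi hp]
    rw [if_pos (exists_out_edge hp.2.2.1 hp.head_mem hst),
      if_neg (fun ⟨u, hu⟩ => head_no_in hp.2.2.2 hp.2.1 hu)]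
    norm_num

end Part2

section Part3
variable {A : Finset (V × V)} {s t : V}

lemma acyclic_wf (hA : Acyclic A) : WellFounded (fun w v : V => (v, w) ∈ A) := by
  have hirr : IsIrrefl V (Relation.TransGen (fun w v : V => (v, w) ∈ A)) :=
    ⟨fun v hv => hA v (Relation.transGen_swap.mp hv)⟩
  have hwf : WellFounded (Relation.TransGen (fun w v : V => (v, w) ∈ A)) :=
    Finite.wellFounded_of_trans_of_irrefl _
  exact Subrelation.wf (fun h => Relation.TransGen.single h) hwf

lemma acyclic_wf' (hA : Acyclic A) : WellFounded (fun u v : V => (u, v) ∈ A) := by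
  have hirr : IsIrrefl V (Relation.TransGen (fun u v : V => (u, v) ∈ A)) :=
    ⟨fun v hv => hA v hv⟩
  have hwf : WellFounded (Relation.TransGen (fun u v : V => (u, v) ∈ A)) :=
    Finite.wellFounded_of_trans_of_irrefl _
  exact Subrelation.wf (fun h => Relation.TransGen.single h) hwf

lemma forward_path (hA : Acyclic A) {y : V × V → ℝ} (hnn : ∀ e, 0 ≤ y e)
    (hstep : ∀ v, v ≠ t → 0 < inSum A y v → 0 < outSum A y v) :
    ∀ v, (v = t ∨ 0 < outSum A y v) → ∃ p, IsPath A v t p ∧ ∀ e ∈ pathEdges p, 0 < y e := by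
  intro v
  induction v using (acyclic_wf hA).induction with
  | _ v ih =>
    intro hv
    rcases hv with rfl | hpos
    · exact ⟨[v], path_single, by simp [pathEdges_single]⟩
    · have hex : ∃ e ∈ A.filter (fun e => e.1 = v), 0 < y e := by
        by_contra h
        push_neg at h
        have : outSum A y v ≤ 0 := Finset.sum_nonpos (fun e he => h e he)
        linarith
      obtain ⟨e, hef, hey⟩ := hex
      obtain ⟨a, b⟩ := e
      obtain ⟨heA, he1⟩ := Finset.mem_filter.mp hef
      simp only at he1
      subst he1
      have hcond : b = t ∨ 0 < outSum A y b := by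
        by_cases hbt : b = t
        · exact Or.inl hbt
        · refine Or.inr (hstep b hbt ?_)
          have h1 : y (a, b) ≤ inSum A y b :=
            Finset.single_le_sum (fun e _ => hnn e) (Finset.mem_filter.mpr ⟨heA, rfl⟩)
          linarith
      obtain ⟨p, hp, hppos⟩ := ih b heA hcond
      have hvp : a ∉ p := by
        intro hvp
        exact hA a (Relation.TransGen.head' heA (path_rtg_head hp hvp))
      obtain ⟨l, rfl⟩ := hp.head_cons
      refine ⟨a :: b :: l, ⟨List.isChain_cons_cons.mpr ⟨heA, hp.1⟩, rfl, ?_, ?_⟩, ?_⟩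
      · rw [List.getLast?_cons_cons]; exact hp.2.2.1
      · exact List.nodup_cons.mpr ⟨hvp, hp.2.2.2⟩
      · intro e he
        rw [pathEdges_cons₂] at he
        rcases List.mem_cons.mp he with rfl | he'
        · exact hey
        · exact hppos e he'

lemma backward_path (hA : Acyclic A) {y : V × V → ℝ} (hnn : ∀ e, 0 ≤ y e)
    (hstep : ∀ v, v ≠ s → 0 < outSum A y v → 0 < inSum A y v) :
    ∀ v, (v = s ∨ 0 < inSum A y v) → ∃ p, IsPath A s v p ∧ ∀ e ∈ pathEdges p, 0 < y e := by
  intro v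
  induction v using (acyclic_wf' hA).induction with
  | _ v ih =>
    intro hv
    rcases hv with rfl | hpos
    · exact ⟨[v], path_single, by simp [pathEdges_single]⟩
    · have hex : ∃ e ∈ A.filter (fun e => e.2 = v), 0 < y e := by
        by_contra h
        push_neg at h
        have : inSum A y v ≤ 0 := Finset.sum_nonpos (fun e he => h e he)
        linarith
      obtain ⟨e, hef, hey⟩ := hex
      obtain ⟨a, b⟩ := e
      obtain ⟨heA, he2⟩ := Finset.mem_filter.mp hef
      simp only at he2
      subst he2
      have hcond : a = s ∨ 0 < inSum A y a := by
        by_cases has : a = s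
        · exact Or.inl has
        · refine Or.inr (hstep a has ?_)
          have h1 : y (a, b) ≤ outSum A y a :=
            Finset.single_le_sum (fun e _ => hnn e) (Finset.mem_filter.mpr ⟨heA, rfl⟩)
          linarith
      obtain ⟨p, hp, hppos⟩ := ih a heA hcond
      have hvp : b ∉ p := by
        intro hvp
        exact hA b (Relation.TransGen.tail' (path_rtg_last hp hvp) heA)
      have hedges : pathEdges (p ++ [b]) = pathEdges p ++ pathEdges [a, b] :=
        pathEdges_append_eq [b] hp.2.2.1
      refine ⟨p ++ [b], ⟨?_, ?_, ?_, ?_⟩, ?_⟩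
      · refine List.IsChain.append hp.1 (by simp) ?_
        intro c hc d hd
        simp only [List.head?_cons, Option.some.injEq] at hd
        have hca : c = a := by
          rw [hp.2.2.1] at hc
          exact (Option.mem_some_iff.mp hc).symm
        have hdb : d = b := (Option.mem_some_iff.mp hd).symm
        rw [hca, hdb]
        exact heA
      · obtain ⟨l, rfl⟩ := hp.head_cons
        simp
      · exact List.getLast?_concat
      · rw [List.nodup_append]
        exact ⟨hp.2.2.2, by simp, fun c hc d hd hcd => hvp (by rw [← List.mem_singleton.mp hd, ← hcd]; exact hc)⟩
      · intro e he
        rw [hedges, List.mem_append] at he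
        rcases he with he' | he'
        · exact hppos e he'
        · rw [pathEdges_cons₂, pathEdges_single] at he'
          simp only [List.mem_singleton] at he'
          rw [he']
          exact hey

lemma circ_zero (hA : Acyclic A) {y : V × V → ℝ} (h0 : ∀ e ∉ A, y e = 0) (hnn : ∀ e, 0 ≤ y e)
    (hcons : ∀ v, outSum A y v = inSum A y v) : ∀ e, y e = 0 := by
  by_contra h
  push_neg at h
  obtain ⟨e, he⟩ := h
  obtain ⟨a, b⟩ := e
  have hey : 0 < y (a, b) := lt_of_le_of_ne (hnn _) (Ne.symm he)
  have heA : (a, b) ∈ A := by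
    by_contra h'
    exact he (h0 _ h')
  have hstep : ∀ v, v ≠ a → 0 < inSum A y v → 0 < outSum A y v :=
    fun v _ hv => (hcons v) ▸ hv
  have hout : 0 < outSum A y b := by
    rw [hcons b]
    exact lt_of_lt_of_le hey
      (Finset.single_le_sum (fun e _ => hnn e) (Finset.mem_filter.mpr ⟨heA, rfl⟩))
  obtain ⟨p, hp, _⟩ := forward_path (t := a) hA hnn hstep b (Or.inr hout)
  exact hA a (Relation.TransGen.head' heA (path_rtg_head hp hp.last_mem))

lemma outSum_sub {x y : V × V → ℝ} {v : V} :
    outSum A (x - y) v = outSum A x v - outSum A y v := by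
  simp [outSum, Finset.sum_sub_distrib]

lemma inSum_sub {x y : V × V → ℝ} {v : V} :
    inSum A (x - y) v = inSum A x v - inSum A y v := by
  simp [inSum, Finset.sum_sub_distrib]

lemma outSum_smul {x : V × V → ℝ} {c : ℝ} {v : V} :
    outSum A (c • x) v = c * outSum A x v := by
  simp [outSum, Finset.mul_sum]

lemma inSum_smul {x : V × V → ℝ} {c : ℝ} {v : V} :
    inSum A (c • x) v = c * inSum A x v := by
  simp [inSum, Finset.mul_sum]

lemma edges_nonempty {p : List V} (hp : IsPath A s t p) (hst : s ≠ t) : pathEdges p ≠ [] := by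
  obtain ⟨l, rfl⟩ := hp.head_cons
  cases l with
  | nil => exact absurd (by simpa using hp.2.2.1) hst
  | cons y l' => simp [pathEdges_cons₂]

lemma flow_decomp_aux (hA : Acyclic A) : ∀ (n : ℕ) (x : V × V → ℝ),
    (A.filter (fun e => x e ≠ 0)).card ≤ n → IsFlow A s t x →
    ∃ (Q : Finset (List V)) (lam : List V → ℝ),
      (∀ p ∈ Q, IsPath A s t p) ∧ (∀ p ∈ Q, 0 < lam p) ∧
      ∑ p ∈ Q, lam p = 1 ∧ x = ∑ p ∈ Q, lam p • chi p := by
  intro n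
  induction n with
  | zero =>
      intro x hcard hx
      exfalso
      have hall : ∀ e ∈ A, x e = 0 := by
        intro e heA
        by_contra h
        have hmem : e ∈ A.filter (fun e => x e ≠ 0) := Finset.mem_filter.mpr ⟨heA, h⟩
        have := Finset.card_pos.mpr ⟨e, hmem⟩
        omega
      have h1 : outSum A x s = 0 := Finset.sum_eq_zero (fun e he =>
        hall e (Finset.mem_filter.mp he).1)
      have h2 : inSum A x s = 0 := Finset.sum_eq_zero (fun e he =>
        hall e (Finset.mem_filter.mp he).1)
      have := hx.2.2.2
      rw [h1, h2] at this
      norm_num at this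
  | succ n ih =>
      intro x hcard hx
      obtain ⟨hst, hbt⟩ := flow_balance hx
      have hstep : ∀ v, v ≠ t → 0 < inSum A x v → 0 < outSum A x v := by
        intro v hvt hin
        by_cases hvs : v = s
        · subst hvs; nlinarith [hx.2.2.2]
        · rw [hx.2.2.1 v hvs hvt]; exact hin
      have houts : 0 < outSum A x s := by
        have hin : 0 ≤ inSum A x s :=
          Finset.sum_nonneg (fun e _ => hx.2.1 e)
        nlinarith [hx.2.2.2]
      obtain ⟨p, hp, hpos⟩ := forward_path hA hx.2.1 hstep s (Or.inr houts)
      have hEne : (pathEdges p).toFinset.Nonempty := by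
        obtain ⟨e, he⟩ := List.exists_mem_of_ne_nil _ (edges_nonempty hp hst)
        exact ⟨e, List.mem_toFinset.mpr he⟩
      obtain ⟨e0, he0mem', he0min⟩ := Finset.exists_min_image (pathEdges p).toFinset x hEne
      have he0mem : e0 ∈ pathEdges p := List.mem_toFinset.mp he0mem'
      set ε := x e0 with hε
      have hεpos : 0 < ε := hpos e0 he0mem
      have hchie0 : chi p e0 = 1 := by rw [chi, if_pos he0mem]
      have hchixle : ∀ e, ε * chi p e ≤ x e := by
        intro e
        rw [chi]
        split
        · rename_i hmem
          rw [mul_one]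
          exact he0min e (List.mem_toFinset.mpr hmem)
        · rw [mul_zero]; exact hx.2.1 e
      have hchiflow := chi_flow hp hst
      obtain ⟨_, hbtchi⟩ := flow_balance hchiflow
      by_cases hε1 : 1 ≤ ε
      · have hxp : x = chi p := by
          have hcons : ∀ v, outSum A (x - chi p) v = inSum A (x - chi p) v := by
            intro v
            rw [outSum_sub, inSum_sub]
            by_cases hvs : v = s
            · subst hvs
              have := hx.2.2.2
              have := hchiflow.2.2.2
              linarith
            · by_cases hvt : v = t
              · subst hvt; linarith
              · rw [hx.2.2.1 v hvs hvt, hchiflow.2.2.1 v hvs hvt]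
          have hnn : ∀ e, 0 ≤ (x - chi p) e := by
            intro e
            have := hchixle e
            have hc1 : chi p e ≤ 1 := by rw [chi]; split <;> norm_num
            have hc0 : 0 ≤ chi p e := by rw [chi]; split <;> norm_num
            simp only [Pi.sub_apply]
            nlinarith
          have h0 : ∀ e ∉ A, (x - chi p) e = 0 := by
            intro e he
            simp only [Pi.sub_apply, hx.1 e he, hchiflow.1 e he, sub_zero]
          have := circ_zero hA h0 hnn hcons
          funext e
          have := this e
          simp only [Pi.sub_apply] at this
          linarith
        refine ⟨{p}, fun _ => 1, by simpa using hp, by norm_num, by simp, ?_⟩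
        rw [Finset.sum_singleton, one_smul, hxp]
      · push_neg at hε1
        have h1ε : (0:ℝ) < 1 - ε := by linarith
        set y := (1 - ε)⁻¹ • (x - ε • chi p) with hy
        have hyval : ∀ e, y e = (1 - ε)⁻¹ * (x e - ε * chi p e) := by
          intro e; rw [hy]; simp
        have hyflow : IsFlow A s t y := by
          refine ⟨fun e he => ?_, fun e => ?_, fun v hvs hvt => ?_, ?_⟩
          · rw [hyval, hx.1 e he, hchiflow.1 e he]; ring
          · rw [hyval]
            have := hchixle e
            have : 0 ≤ x e - ε * chi p e := by linarith
            positivity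
          · rw [hy, outSum_smul, inSum_smul, outSum_sub, inSum_sub, outSum_smul, inSum_smul,
              hx.2.2.1 v hvs hvt, hchiflow.2.2.1 v hvs hvt]
          · rw [hy, outSum_smul, inSum_smul, outSum_sub, inSum_sub, outSum_smul, inSum_smul]
            have h1 := hx.2.2.2
            have h2 := hchiflow.2.2.2
            field_simp
            nlinarith
        have hsub : A.filter (fun e => y e ≠ 0) ⊂ A.filter (fun e => x e ≠ 0) := by
          constructor
          · intro e he
            obtain ⟨heA, hey⟩ := Finset.mem_filter.mp he
            refine Finset.mem_filter.mpr ⟨heA, fun hxe => hey ?_⟩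
            have hchi0 : chi p e = 0 := by
              rw [chi]
              split
              · rename_i hmem
                exact absurd hxe (ne_of_gt (hpos e hmem))
              · rfl
            rw [hyval, hxe, hchi0]; ring
          · intro hsub'
            have he0x : e0 ∈ A.filter (fun e => x e ≠ 0) :=
              Finset.mem_filter.mpr ⟨hp.edges_mem he0mem, ne_of_gt hεpos⟩
            have he0y := hsub' he0x
            obtain ⟨_, hey⟩ := Finset.mem_filter.mp he0y
            refine hey ?_
            rw [hyval, hchie0, ← hε]; ring
        have hcard' : (A.filter (fun e => y e ≠ 0)).card ≤ n := by
          have := Finset.card_lt_card hsub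
          omega
        obtain ⟨Q, lam, hQpath, hQpos, hQsum, hQeq⟩ := ih y hcard' hyflow
        refine ⟨insert p Q,
          fun q => (if q = p then ε else 0) + (1 - ε) * (if q ∈ Q then lam q else 0),
          ?_, ?_, ?_, ?_⟩
        · intro q hq
          rcases Finset.mem_insert.mp hq with rfl | hq'
          · exact hp
          · exact hQpath q hq'
        · intro q hq
          have h2 : 0 ≤ (1 - ε) * (if q ∈ Q then lam q else 0) := by
            by_cases h' : q ∈ Q
            · rw [if_pos h']; exact mul_nonneg h1ε.le (hQpos q h').le
            · rw [if_neg h']; simp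
          by_cases hqp : q = p
          · simp only [if_pos hqp]
            linarith
          · have hq' : q ∈ Q := (Finset.mem_insert.mp hq).resolve_left hqp
            simp only [if_neg hqp, if_pos hq', zero_add]
            nlinarith [hQpos q hq']
        · rw [Finset.sum_add_distrib]
          rw [Finset.sum_ite_eq' (insert p Q) p (fun _ => ε)]
          rw [if_pos (Finset.mem_insert_self p Q)]
          rw [← Finset.mul_sum, Finset.sum_ite_mem,
            Finset.inter_eq_right.mpr (Finset.subset_insert p Q), hQsum]
          ring
        · have hxy : x = ε • chi p + (1 - ε) • y := by
            rw [hy, smul_inv_smul₀ (ne_of_gt h1ε)]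
            funext e; simp
          have hterm : ∀ q ∈ insert p Q,
              ((if q = p then ε else 0) + (1 - ε) * (if q ∈ Q then lam q else 0)) • chi q
              = (if q = p then ε • chi q else 0)
                + (1 - ε) • (if q ∈ Q then lam q • chi q else 0) := by
            intro q _
            rw [add_smul]
            congr 1
            · split
              · rfl
              · rw [zero_smul]
            · rw [mul_smul]
              congr 1
              split
              · rfl
              · rw [zero_smul]
          rw [hxy, hQeq, Finset.sum_congr rfl hterm, Finset.sum_add_distrib,
            Finset.sum_ite_eq' (insert p Q) p (fun q => ε • chi q),
            if_pos (Finset.mem_insert_self p Q), ← Finset.smul_sum, Finset.sum_ite_mem,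
            Finset.inter_eq_right.mpr (Finset.subset_insert p Q)]

end Part3



section Part4
variable {A : Finset (V × V)} {s t u v w z : V} {e : V × V} {p q c : List V}

lemma mem_redArcs_iff : e ∈ redArcs A s t ↔ ∃ p, IsPath A s t p ∧ e ∈ pathEdges p := by
  rw [redArcs, Finset.mem_filter]
  exact ⟨fun h => h.2, fun ⟨p, hp, he⟩ => ⟨hp.edges_mem he, p, hp, he⟩⟩

lemma edge_mem_redArcs (hp : IsPath A s t p) (he : e ∈ pathEdges p) : e ∈ redArcs A s t :=
  mem_redArcs_iff.mpr ⟨p, hp, he⟩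

lemma path_st_single (hp : IsPath A s s p) : p = [s] := by
  obtain ⟨l, rfl⟩ := hp.head_cons
  cases l with
  | nil => rfl
  | cons y l' =>
      exfalso
      have hl : (s :: y :: l').getLast? = some s := hp.2.2.1
      rw [List.getLast?_cons_cons] at hl
      obtain ⟨hne, hlast⟩ := List.mem_getLast?_eq_getLast (show s ∈ (y :: l').getLast? from hl ▸ rfl)
      exact (List.nodup_cons.mp hp.2.2.2).1 (hlast ▸ List.getLast_mem hne)

lemma redArcs_st (he : e ∈ redArcs A s t) : s ≠ t := by
  rintro rfl
  obtain ⟨p, hp, hep⟩ := mem_redArcs_iff.mp he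
  rw [path_st_single hp] at hep
  simp [pathEdges_single] at hep

lemma no_in_s : (u, s) ∉ redArcs A s t := by
  intro h
  obtain ⟨p, hp, hep⟩ := mem_redArcs_iff.mp h
  exact head_no_in hp.2.2.2 hp.2.1 hep

lemma no_out_t : (t, w) ∉ redArcs A s t := by
  intro h
  obtain ⟨p, hp, hep⟩ := mem_redArcs_iff.mp h
  exact last_no_out hp.2.2.2 hp.2.2.1 hep

lemma dminus_s : dminus A s t s = 0 := by
  rw [dminus, Finset.card_eq_zero, Finset.filter_eq_empty_iff]
  rintro ⟨a, b⟩ hab rfl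
  exact no_in_s hab

lemma dplus_t : dplus A s t t = 0 := by
  rw [dplus, Finset.card_eq_zero, Finset.filter_eq_empty_iff]
  rintro ⟨a, b⟩ hab rfl
  exact no_out_t hab

lemma dplus_pos (he : e ∈ redArcs A s t) : 0 < dplus A s t e.1 :=
  Finset.card_pos.mpr ⟨e, Finset.mem_filter.mpr ⟨he, rfl⟩⟩

lemma dminus_pos (he : e ∈ redArcs A s t) : 0 < dminus A s t e.2 :=
  Finset.card_pos.mpr ⟨e, Finset.mem_filter.mpr ⟨he, rfl⟩⟩

lemma dplus_one_unique {e e' : V × V} (h1 : dplus A s t v = 1)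
    (he : e ∈ redArcs A s t) (he1 : e.1 = v) (he' : e' ∈ redArcs A s t) (he'1 : e'.1 = v) :
    e = e' := by
  obtain ⟨a, ha⟩ := Finset.card_eq_one.mp h1
  have h1' : e ∈ ((redArcs A s t).filter fun a => a.1 = v) := Finset.mem_filter.mpr ⟨he, he1⟩
  have h2' : e' ∈ ((redArcs A s t).filter fun a => a.1 = v) := Finset.mem_filter.mpr ⟨he', he'1⟩
  rw [ha, Finset.mem_singleton] at h1' h2'
  rw [h1', h2']

lemma dminus_one_unique {e e' : V × V} (h1 : dminus A s t v = 1)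
    (he : e ∈ redArcs A s t) (he1 : e.2 = v) (he' : e' ∈ redArcs A s t) (he'1 : e'.2 = v) :
    e = e' := by
  obtain ⟨a, ha⟩ := Finset.card_eq_one.mp h1
  have h1' : e ∈ ((redArcs A s t).filter fun a => a.2 = v) := Finset.mem_filter.mpr ⟨he, he1⟩
  have h2' : e' ∈ ((redArcs A s t).filter fun a => a.2 = v) := Finset.mem_filter.mpr ⟨he', he'1⟩
  rw [ha, Finset.mem_singleton] at h1' h2'
  rw [h1', h2']

lemma dplus_two {e : V × V} (h2 : 2 ≤ dplus A s t v) (he : e ∈ redArcs A s t) (he1 : e.1 = v) :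
    ∃ e' ∈ redArcs A s t, e'.1 = v ∧ e' ≠ e := by
  by_contra h
  push_neg at h
  have hsub : ((redArcs A s t).filter fun a => a.1 = v) ⊆ {e} := by
    intro a ha
    obtain ⟨ha1, ha2⟩ := Finset.mem_filter.mp ha
    exact Finset.mem_singleton.mpr (h a ha1 ha2)
  have := Finset.card_le_card hsub
  rw [Finset.card_singleton] at this
  rw [dplus] at h2
  omega

lemma dminus_two {e : V × V} (h2 : 2 ≤ dminus A s t v) (he : e ∈ redArcs A s t) (he1 : e.2 = v) :
    ∃ e' ∈ redArcs A s t, e'.2 = v ∧ e' ≠ e := by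
  by_contra h
  push_neg at h
  have hsub : ((redArcs A s t).filter fun a => a.2 = v) ⊆ {e} := by
    intro a ha
    obtain ⟨ha1, ha2⟩ := Finset.mem_filter.mp ha
    exact Finset.mem_singleton.mpr (h a ha1 ha2)
  have := Finset.card_le_card hsub
  rw [Finset.card_singleton] at this
  rw [dminus] at h2
  omega

lemma force_fwd {x y w : V} (hq : IsPath A u t q)
    (hsub : ∀ e ∈ pathEdges q, e ∈ redArcs A s t)
    (hxy : (x, y) ∈ pathEdges q) (hd : dplus A s t y = 1)
    (hyw : (y, w) ∈ redArcs A s t) : (y, w) ∈ pathEdges q := by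
  have hyt : y ≠ t := by
    intro h
    rw [h, dplus_t] at hd
    omega
  obtain ⟨w', hw'⟩ := exists_out_edge hq.2.2.1 (edge_snd_mem hxy) hyt
  have heq := dplus_one_unique hd (hsub _ hw') rfl hyw rfl
  rw [← heq]
  exact hw'

lemma force_bwd {x y w : V} (hq : IsPath A s v q)
    (hsub : ∀ e ∈ pathEdges q, e ∈ redArcs A s t)
    (hyw : (y, w) ∈ pathEdges q) (hd : dminus A s t y = 1)
    (hxy : (x, y) ∈ redArcs A s t) : (x, y) ∈ pathEdges q := by
  have hys : y ≠ s := by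
    intro h
    rw [h, dminus_s] at hd
    omega
  obtain ⟨x', hx'⟩ := exists_in_edge hq.2.1 (edge_fst_mem hyw) hys
  have heq := dminus_one_unique hd (hsub _ hx') rfl hxy rfl
  rw [← heq]
  exact hx'

end Part4

section Part5
variable {A : Finset (V × V)} {s t : V}

lemma chain_imp_A {c : List V} (hc : c.Chain' (fun a b => (a, b) ∈ redArcs A s t)) :
    c.Chain' (fun a b => (a, b) ∈ A) :=
  hc.imp (fun a b hab => Finset.filter_subset _ _ hab)

lemma chain_nodup_of_acyclic (hA : Acyclic A) : ∀ {c : List V},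
    c.Chain' (fun a b : V => (a, b) ∈ A) → c.Nodup
  | [] => by simp
  | a :: l => by
      intro hc
      rw [List.nodup_cons]
      constructor
      · intro hal
        cases l with
        | nil => simp at hal
        | cons b l' =>
            have hab : (a, b) ∈ A := (List.isChain_cons_cons.mp hc).1
            have := chain'_rtg (R := fun a b : V => (a, b) ∈ A)
              (List.isChain_cons_cons.mp hc).2 rfl hal
            exact hA a (Relation.TransGen.head' hab this)
      · exact chain_nodup_of_acyclic hA hc.tail

lemma all_fwd {u : V} : ∀ {rest : List V} {x y : V} {q : List V},
    List.Chain' (fun a b => (a, b) ∈ redArcs A s t) (x :: y :: rest) →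
    (∀ v ∈ (y :: rest).dropLast, dminus A s t v = 1 ∧ dplus A s t v = 1) →
    IsPath A u t q → (∀ e ∈ pathEdges q, e ∈ redArcs A s t) →
    (x, y) ∈ pathEdges q →
    ∀ e ∈ pathEdges (x :: y :: rest), e ∈ pathEdges q := by
  intro rest
  induction rest with
  | nil =>
      intro x y q _ _ _ _ h1 e he
      rw [pathEdges_cons₂, pathEdges_single] at he
      simp only [List.mem_singleton] at he
      rw [he]; exact h1
  | cons z rest' ih =>
      intro x y q hc hint hq hsub h1 e he
      have hyz : (y, z) ∈ redArcs A s t := (List.isChain_cons_cons.mp (List.isChain_cons_cons.mp hc).2).1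
      have hyint := hint y (by simp)
      have h2 : (y, z) ∈ pathEdges q := force_fwd hq hsub h1 hyint.2 hyz
      rw [pathEdges_cons₂] at he
      rcases List.mem_cons.mp he with rfl | he'
      · exact h1
      · refine ih (List.isChain_cons_cons.mp hc).2 (fun v hv => hint v ?_) hq hsub h2 e he'
        rw [show (y :: z :: rest').dropLast = y :: (z :: rest').dropLast from rfl]
        exact List.mem_cons_of_mem _ hv

lemma prop_fwd {u : V} : ∀ {rest : List V} {x y z : V} {q : List V},
    List.Chain' (fun a b => (a, b) ∈ redArcs A s t) (x :: y :: rest) →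
    (∀ v ∈ (y :: rest).dropLast, dminus A s t v = 1 ∧ dplus A s t v = 1) →
    IsPath A u t q → (∀ e ∈ pathEdges q, e ∈ redArcs A s t) →
    (x :: y :: rest).getLast? = some z →
    ∀ e ∈ pathEdges (x :: y :: rest), e ∈ pathEdges q →
    ∃ w, (w, z) ∈ pathEdges q ∧ (w, z) ∈ pathEdges (x :: y :: rest) := by
  intro rest
  induction rest with
  | nil =>
      intro x y z q _ _ _ _ hlast e he heq
      rw [List.getLast?_cons_cons, List.getLast?_singleton] at hlast
      have hzy : z = y := Option.some.inj hlast.symm ▸ rfl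
      rw [pathEdges_cons₂, pathEdges_single] at he
      simp only [List.mem_singleton] at he
      subst he
      exact ⟨x, by rw [hzy]; exact heq, by rw [hzy]; simp [pathEdges_cons₂]⟩
  | cons z' rest' ih =>
      intro x y z q hc hint hq hsub hlast e he heq
      have hyz' : (y, z') ∈ redArcs A s t := (List.isChain_cons_cons.mp (List.isChain_cons_cons.mp hc).2).1
      have hyint := hint y (by simp)
      have hlast' : (y :: z' :: rest').getLast? = some z := by
        rwa [List.getLast?_cons_cons] at hlast
      have hint' : ∀ v ∈ (z' :: rest').dropLast, dminus A s t v = 1 ∧ dplus A s t v = 1 := by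
        intro v hv
        refine hint v ?_
        rw [show (y :: z' :: rest').dropLast = y :: (z' :: rest').dropLast from rfl]
        exact List.mem_cons_of_mem _ hv
      rw [pathEdges_cons₂] at he
      rcases List.mem_cons.mp he with rfl | he'
      · have h2 : (y, z') ∈ pathEdges q := force_fwd hq hsub heq hyint.2 hyz'
        obtain ⟨w, hw1, hw2⟩ := ih (List.isChain_cons_cons.mp hc).2 hint' hq hsub hlast'
          (y, z') (by simp [pathEdges_cons₂]) h2
        exact ⟨w, hw1, by rw [pathEdges_cons₂]; exact List.mem_cons_of_mem _ hw2⟩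
      · obtain ⟨w, hw1, hw2⟩ := ih (List.isChain_cons_cons.mp hc).2 hint' hq hsub hlast' e he' heq
        exact ⟨w, hw1, by rw [pathEdges_cons₂]; exact List.mem_cons_of_mem _ hw2⟩

lemma prop_bwd {v : V} : ∀ {rest : List V} {x y : V} {q : List V},
    List.Chain' (fun a b => (a, b) ∈ redArcs A s t) (x :: y :: rest) →
    (∀ v ∈ (y :: rest).dropLast, dminus A s t v = 1 ∧ dplus A s t v = 1) →
    IsPath A s v q → (∀ e ∈ pathEdges q, e ∈ redArcs A s t) →
    ∀ e ∈ pathEdges (x :: y :: rest), e ∈ pathEdges q →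
    (x, y) ∈ pathEdges q := by
  intro rest
  induction rest with
  | nil =>
      intro x y q _ _ _ _ e he heq
      rw [pathEdges_cons₂, pathEdges_single] at he
      simp only [List.mem_singleton] at he
      subst he
      exact heq
  | cons z' rest' ih =>
      intro x y q hc hint hq hsub e he heq
      have hxy : (x, y) ∈ redArcs A s t := (List.isChain_cons_cons.mp hc).1
      have hyint := hint y (by simp)
      have hint' : ∀ v ∈ (z' :: rest').dropLast, dminus A s t v = 1 ∧ dplus A s t v = 1 := by
        intro v hv
        refine hint v ?_
        rw [show (y :: z' :: rest').dropLast = y :: (z' :: rest').dropLast from rfl]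
        exact List.mem_cons_of_mem _ hv
      rw [pathEdges_cons₂] at he
      rcases List.mem_cons.mp he with rfl | he'
      · exact heq
      · have h2 : (y, z') ∈ pathEdges q :=
          ih (List.isChain_cons_cons.mp hc).2 hint' hq hsub e he' heq
        exact force_bwd hq hsub h2 hyint.1 hxy

end Part5

section Part6
variable {A : Finset (V × V)} {s t : V}

lemma path_edges_red {q : List V} (hq : IsPath A s t q) :
    ∀ e ∈ pathEdges q, e ∈ redArcs A s t := fun _ he => edge_mem_redArcs hq he

lemma path_eq_chain (hA : Acyclic A) : ∀ {rest : List V} {x y z : V} {q : List V},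
    List.Chain' (fun a b => (a, b) ∈ redArcs A s t) (x :: y :: rest) →
    (∀ v ∈ (y :: rest).dropLast, dminus A s t v = 1 ∧ dplus A s t v = 1) →
    (x :: y :: rest).getLast? = some z →
    IsPath A x z q → (∀ e ∈ pathEdges q, e ∈ redArcs A s t) →
    (x, y) ∈ pathEdges q → q = x :: y :: rest := by
  intro rest
  induction rest with
  | nil =>
      intro x y z q hc hint hlast hq hsub h1
      rw [List.getLast?_cons_cons, List.getLast?_singleton] at hlast
      have hzy : y = z := Option.some.inj hlast
      subst hzy
      obtain ⟨l, rfl⟩ := hq.head_cons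
      cases l with
      | nil => simp [pathEdges_single] at h1
      | cons y' l' =>
          have h1' : (x, y') ∈ pathEdges (x :: y' :: l') := by simp [pathEdges_cons₂]
          have hyy : y' = y := edge_tail_unique hq.2.2.2 h1' h1
          subst hyy
          cases l' with
          | nil => rfl
          | cons w l'' =>
              exfalso
              have hlq : (x :: y' :: w :: l'').getLast? = some y' := hq.2.2.1
              rw [List.getLast?_cons_cons, List.getLast?_cons_cons] at hlq
              obtain ⟨hne, hlast'⟩ := List.mem_getLast?_eq_getLast
                (show y' ∈ (w :: l'').getLast? from hlq ▸ rfl)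
              have : y' ∈ w :: l'' := hlast' ▸ List.getLast_mem hne
              exact (List.nodup_cons.mp (List.nodup_cons.mp hq.2.2.2).2).1 this
  | cons z' rest' ih =>
      intro x y z q hc hint hlast hq hsub h1
      have hcnodup : (x :: y :: z' :: rest').Nodup :=
        chain_nodup_of_acyclic hA (chain_imp_A hc)
      obtain ⟨l, rfl⟩ := hq.head_cons
      cases l with
      | nil => simp [pathEdges_single] at h1
      | cons y' l' =>
          have h1' : (x, y') ∈ pathEdges (x :: y' :: l') := by simp [pathEdges_cons₂]
          have hyy : y' = y := edge_tail_unique hq.2.2.2 h1' h1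
          subst hyy
          have hq' : IsPath A y' z (y' :: l') := path_tail hq
          have hlast' : (y' :: z' :: rest').getLast? = some z := by
            rwa [List.getLast?_cons_cons] at hlast
          cases l' with
          | nil =>
              exfalso
              have hyz : y' = z := by simpa using hq'.2.2.1
              have hl2 : (z' :: rest').getLast? = some z := by
                rwa [List.getLast?_cons_cons] at hlast'
              rw [← hyz] at hl2
              obtain ⟨hne, hlast2⟩ := List.mem_getLast?_eq_getLast
                (show y' ∈ (z' :: rest').getLast? from hl2 ▸ rfl)
              have hyne : y' ∈ z' :: rest' := hlast2 ▸ List.getLast_mem hne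
              exact (List.nodup_cons.mp (List.nodup_cons.mp hcnodup).2).1 hyne
          | cons w l'' =>
              have hfirst : (y', w) ∈ pathEdges (y' :: w :: l'') := by simp [pathEdges_cons₂]
              have hsub' : ∀ e ∈ pathEdges (y' :: w :: l''), e ∈ redArcs A s t := by
                intro e he
                refine hsub e ?_
                rw [pathEdges_cons_head (show (y' :: w :: l'').head? = some y' from rfl)]
                exact List.mem_cons_of_mem _ he
              have hyint := hint y' (by simp)
              have hyz' : (y', z') ∈ redArcs A s t :=
                (List.isChain_cons_cons.mp (List.isChain_cons_cons.mp hc).2).1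
              have hwz : w = z' := by
                have := dplus_one_unique hyint.2 (hsub' _ hfirst) rfl hyz' rfl
                exact (Prod.mk.injEq _ _ _ _ ▸ this).2
              subst hwz
              have hint' : ∀ v ∈ (w :: rest').dropLast,
                  dminus A s t v = 1 ∧ dplus A s t v = 1 := by
                intro v hv
                refine hint v ?_
                rw [show (y' :: w :: rest').dropLast = y' :: (w :: rest').dropLast from rfl]
                exact List.mem_cons_of_mem _ hv
              have := ih (List.isChain_cons_cons.mp hc).2 hint' hlast' hq' hsub' hfirst
              rw [this]

lemma exists_back (hA : Acyclic A) : ∀ v : V,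
    ∃ c : List V, c ≠ [] ∧ c.getLast? = some v ∧
      c.Chain' (fun a b => (a, b) ∈ redArcs A s t) ∧
      (∀ u ∈ c.tail, dminus A s t u = 1 ∧ dplus A s t u = 1) ∧
      (∀ h, c.head? = some h → ¬(dminus A s t h = 1 ∧ dplus A s t h = 1)) := by
  intro v
  induction v using (acyclic_wf' hA).induction with
  | _ v ih =>
    by_cases hv : dminus A s t v = 1 ∧ dplus A s t v = 1
    · obtain ⟨a, ha⟩ := Finset.card_eq_one.mp hv.1
      have haf : a ∈ (redArcs A s t).filter (fun e => e.2 = v) :=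
        ha ▸ Finset.mem_singleton_self a
      obtain ⟨haR, ha2⟩ := Finset.mem_filter.mp haf
      have haR' : (a.1, v) ∈ redArcs A s t := by
        rw [← ha2]
        exact haR
      have hstep : (a.1, v) ∈ A := Finset.filter_subset _ _ haR'
      obtain ⟨c', hc'ne, hc'last, hc'chain, hc'tail, hc'head⟩ := ih a.1 hstep
      obtain ⟨h0, tl, rfl⟩ : ∃ h0 tl, c' = h0 :: tl := by
        cases c' with
        | nil => exact absurd rfl hc'ne
        | cons h0 tl => exact ⟨h0, tl, rfl⟩
      refine ⟨(h0 :: tl) ++ [v], by simp, List.getLast?_concat, ?_, ?_, ?_⟩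
      · refine List.IsChain.append hc'chain (by simp) ?_
        intro c hc d hd
        rw [hc'last] at hc
        have : c = a.1 := (Option.mem_some_iff.mp hc).symm
        have hd' : d = v := (Option.mem_some_iff.mp hd).symm
        rw [this, hd']
        exact haR'
      · intro u hu
        rw [show ((h0 :: tl) ++ [v]).tail = tl ++ [v] from rfl] at hu
        rcases List.mem_append.mp hu with h' | h'
        · exact hc'tail u h'
        · rw [List.mem_singleton.mp h']
          exact hv
      · intro h hh
        rw [show ((h0 :: tl) ++ [v]).head? = some h0 from rfl] at hh
        exact (Option.some.inj hh) ▸ hc'head h0 rfl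
    · exact ⟨[v], by simp, rfl, List.isChain_singleton _, by simp, fun h hh => by
        simp only [List.head?_cons, Option.some.injEq] at hh
        exact hh ▸ hv⟩

lemma exists_fwd (hA : Acyclic A) : ∀ v : V,
    ∃ c : List V, c ≠ [] ∧ c.head? = some v ∧
      c.Chain' (fun a b => (a, b) ∈ redArcs A s t) ∧
      (∀ u ∈ c.dropLast, dminus A s t u = 1 ∧ dplus A s t u = 1) ∧
      (∀ z, c.getLast? = some z → ¬(dminus A s t z = 1 ∧ dplus A s t z = 1)) := by
  intro v
  induction v using (acyclic_wf hA).induction with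
  | _ v ih =>
    by_cases hv : dminus A s t v = 1 ∧ dplus A s t v = 1
    · obtain ⟨a, ha⟩ := Finset.card_eq_one.mp hv.2
      have haf : a ∈ (redArcs A s t).filter (fun e => e.1 = v) :=
        ha ▸ Finset.mem_singleton_self a
      obtain ⟨haR, ha1⟩ := Finset.mem_filter.mp haf
      have haR' : (v, a.2) ∈ redArcs A s t := by
        rw [← ha1]
        exact haR
      have hstep : (v, a.2) ∈ A := Finset.filter_subset _ _ haR'
      obtain ⟨c', hc'ne, hc'head, hc'chain, hc'drop, hc'last⟩ := ih a.2 hstep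
      refine ⟨v :: c', by simp, rfl, ?_, ?_, ?_⟩
      · simp only [List.Chain', List.isChain_cons]
        refine ⟨fun b hb => ?_, hc'chain⟩
        rw [hc'head] at hb
        rw [(Option.mem_some_iff.mp hb).symm]
        exact haR'
      · intro u hu
        rw [List.dropLast_cons_of_ne_nil hc'ne] at hu
        rcases List.mem_cons.mp hu with rfl | h'
        · exact hv
        · exact hc'drop u h'
      · intro z hz
        rw [getLast?_cons_of_ne_nil hc'ne] at hz
        exact hc'last z hz
    · exact ⟨[v], by simp, rfl, List.isChain_singleton _, by simp, fun z hz => by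
        simp only [List.getLast?_singleton, Option.some.injEq] at hz
        rw [hz] at hv
        exact fun hc => hv hc⟩

lemma corridor_of_arc (hA : Acyclic A) {v w : V} (he : (v, w) ∈ redArcs A s t) :
    ∃ c, IsCorridor A s t c ∧ (v, w) ∈ pathEdges c := by
  obtain ⟨B, hBne, hBlast, hBchain, hBtail, hBhead⟩ := exists_back hA v
  obtain ⟨F, hFne, hFhead, hFchain, hFdrop, hFlast⟩ := exists_fwd hA w
  obtain ⟨b0, Btl, rfl⟩ : ∃ b0 Btl, B = b0 :: Btl := by
    cases B with
    | nil => exact absurd rfl hBne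
    | cons b0 Btl => exact ⟨b0, Btl, rfl⟩
  obtain ⟨Ftl, rfl⟩ : ∃ Ftl, F = w :: Ftl := by
    cases F with
    | nil => exact absurd rfl hFne
    | cons f0 Ftl =>
        have hf0 : f0 = w := by simpa using hFhead
        exact ⟨Ftl, by rw [hf0]⟩
  refine ⟨(b0 :: Btl) ++ (w :: Ftl), ⟨?_, ?_, ?_, ?_, ?_⟩, ?_⟩
  · simp only [List.length_append, List.length_cons]
    omega
  · refine List.IsChain.append hBchain hFchain ?_
    intro c hc d hd
    rw [hBlast] at hc
    simp only [List.head?_cons, Option.mem_def, Option.some.injEq] at hc hd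
    rw [← hc, ← hd]
    exact he
  · intro u hu
    rw [show ((b0 :: Btl) ++ (w :: Ftl)).tail = Btl ++ (w :: Ftl) from rfl] at hu
    rw [List.dropLast_append_of_ne_nil (by simp)] at hu
    rcases List.mem_append.mp hu with h' | h'
    · exact hBtail u (by exact h')
    · exact hFdrop u h'
  · intro h hh
    rw [show ((b0 :: Btl) ++ (w :: Ftl)).head? = some b0 from rfl] at hh
    rw [← Option.some.inj hh]
    exact not_and_or.mp (hBhead b0 rfl)
  · intro z hz
    rw [List.getLast?_append_of_ne_nil _ (by simp)] at hz
    exact not_and_or.mp (hFlast z hz)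
  · have hedges : pathEdges ((b0 :: Btl) ++ (w :: Ftl)) =
        pathEdges (b0 :: Btl) ++ pathEdges (v :: w :: Ftl) :=
      pathEdges_append_eq _ hBlast
    rw [hedges, List.mem_append]
    right
    simp [pathEdges_cons₂]

end Part6

section Part7
variable {A : Finset (V × V)} {s t : V}

noncomputable def pathFinset (A : Finset (V × V)) (s t : V) : Finset (List V) :=
  ((Finset.univ : Finset {l : List V // l.Nodup}).filter (fun l => IsPath A s t l.1)).image
    Subtype.val

lemma mem_pathFinset {p : List V} : p ∈ pathFinset A s t ↔ IsPath A s t p := by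
  rw [pathFinset]
  simp only [Finset.mem_image, Finset.mem_filter, Finset.mem_univ, true_and]
  constructor
  · rintro ⟨⟨l, hl⟩, h1, rfl⟩
    exact h1
  · intro hp
    exact ⟨⟨p, hp.2.2.2⟩, hp, rfl⟩

lemma flow_decomp (hA : Acyclic A) {x : (V × V) → ℝ} (hx : IsFlow A s t x) :
    ∃ (Q : Finset (List V)) (lam : List V → ℝ),
      (∀ p ∈ Q, IsPath A s t p) ∧ (∀ p ∈ Q, 0 < lam p) ∧
      ∑ p ∈ Q, lam p = 1 ∧ x = ∑ p ∈ Q, lam p • chi p :=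
  flow_decomp_aux hA _ x le_rfl hx

lemma flow_apply_decomp {Q : Finset (List V)} {lam : List V → ℝ} {x : (V × V) → ℝ}
    (h : x = ∑ p ∈ Q, lam p • chi p) (e : V × V) : x e = ∑ p ∈ Q, lam p * chi p e := by
  rw [h]
  simp [Finset.sum_apply]

lemma flow_avoid (hA : Acyclic A) {x : (V × V) → ℝ} (hx : IsFlow A s t x) {e : V × V}
    (hall : ∀ p, IsPath A s t p → e ∉ pathEdges p) : x e = 0 := by
  obtain ⟨Q, lam, hQ, hpos, hsum, heq⟩ := flow_decomp hA hx
  rw [flow_apply_decomp heq]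
  refine Finset.sum_eq_zero (fun p hp => ?_)
  rw [chi, if_neg (hall p (hQ p hp))]
  ring

lemma flow_all_one (hA : Acyclic A) {x : (V × V) → ℝ} (hx : IsFlow A s t x) {e : V × V}
    (hall : ∀ p, IsPath A s t p → e ∈ pathEdges p) : x e = 1 := by
  obtain ⟨Q, lam, hQ, hpos, hsum, heq⟩ := flow_decomp hA hx
  rw [flow_apply_decomp heq, ← hsum]
  refine Finset.sum_congr rfl (fun p hp => ?_)
  rw [chi, if_pos (hall p (hQ p hp))]
  ring

lemma flow_force (hA : Acyclic A) {x : (V × V) → ℝ} (hx : IsFlow A s t x) {a b : V × V}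
    (himp : ∀ p, IsPath A s t p → b ∈ pathEdges p → a ∈ pathEdges p)
    (hxa : x a = 0) : x b = 0 := by
  obtain ⟨Q, lam, hQ, hpos, hsum, heq⟩ := flow_decomp hA hx
  rw [flow_apply_decomp heq] at hxa ⊢
  have hnn : ∀ p ∈ Q, 0 ≤ lam p * chi p a := by
    intro p hp
    have : (0:ℝ) ≤ chi p a := by rw [chi]; split <;> norm_num
    exact mul_nonneg (hpos p hp).le this
  have hz := (Finset.sum_eq_zero_iff_of_nonneg hnn).mp hxa
  refine Finset.sum_eq_zero (fun p hp => ?_)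
  have := hz p hp
  by_cases hb : b ∈ pathEdges p
  · have ha : a ∈ pathEdges p := himp p (hQ p hp) hb
    rw [chi, if_pos ha, mul_one] at this
    rw [this]
    ring
  · rw [chi, if_neg hb]
    ring

lemma exposed_coord_zero {a : V × V}
    (hex : ∃ x ∈ flowPolytope A s t, x a = 0) :
    IsExposed ℝ (flowPolytope A s t) {x ∈ flowPolytope A s t | x a = 0} := by
  intro _
  refine ⟨-(ContinuousLinearMap.proj a), ?_⟩
  ext x
  simp only [Set.mem_sep_iff, ContinuousLinearMap.neg_apply, ContinuousLinearMap.proj_apply,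
    neg_le_neg_iff]
  constructor
  · rintro ⟨hx, hxa⟩
    exact ⟨hx, fun y hy => by rw [hxa]; exact hy.2.1 a⟩
  · rintro ⟨hx, hmax⟩
    obtain ⟨x0, hx0, hx0a⟩ := hex
    have h1 := hmax x0 hx0
    rw [hx0a] at h1
    exact ⟨hx, le_antisymm h1 (hx.2.1 a)⟩

lemma path_eq_of_edges_subset : ∀ {p : List V} {q : List V} {u : V},
    IsPath A u t p → IsPath A u t q → (∀ e ∈ pathEdges p, e ∈ pathEdges q) → p = q
  | [], q, u => fun hp => absurd rfl hp.ne_nil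
  | [x], q, u => by
      intro hp hq _
      have hxu : x = u := by simpa using hp.2.1
      have hut : u = t := by
        have := hp.2.2.1
        simp only [List.getLast?_singleton, Option.some.injEq] at this
        rw [← hxu]; exact this
      subst hxu
      have hq' : IsPath A x x q := by rw [← hut] at hq; exact hq
      exact (path_st_single hq').symm
  | x :: y :: p', q, u => by
      intro hp hq hsub
      have hxu : x = u := by simpa using hp.2.1
      subst hxu
      have h1 : (x, y) ∈ pathEdges (x :: y :: p') := by simp [pathEdges_cons₂]
      have h1q := hsub _ h1
      obtain ⟨l, rfl⟩ := hq.head_cons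
      cases l with
      | nil => simp [pathEdges_single] at h1q
      | cons y' q'' =>
          have h1q' : (x, y') ∈ pathEdges (x :: y' :: q'') := by simp [pathEdges_cons₂]
          have hyy : y = y' := edge_tail_unique hq.2.2.2 h1q h1q'
          subst hyy
          have hp2 : IsPath A y t (y :: p') := path_tail hp
          have hq2 : IsPath A y t (y :: q'') := path_tail hq
          have hsub2 : ∀ e ∈ pathEdges (y :: p'), e ∈ pathEdges (y :: q'') := by
            intro e he
            have he' : e ∈ pathEdges (x :: y :: p') := by
              rw [pathEdges_cons₂]
              exact List.mem_cons_of_mem _ he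
            have heq := hsub _ he'
            rw [pathEdges_cons₂] at heq
            rcases List.mem_cons.mp heq with h' | h'
            · exfalso
              have : e.1 ∈ y :: p' := edge_fst_mem he
              rw [show e.1 = x by rw [h']] at this
              exact (List.nodup_cons.mp hp.2.2.2).1 this
            · exact h'
          have := path_eq_of_edges_subset hp2 hq2 hsub2
          rw [List.cons.injEq]
          exact ⟨rfl, this⟩

end Part7

section Part8
variable {A : Finset (V × V)} {s t : V}

lemma corridor_destruct {c : List V} (hc : IsCorridor A s t c) :
    ∃ x y rest, c = x :: y :: rest := by
  obtain ⟨hlen, _⟩ := hc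
  cases c with
  | nil => simp at hlen
  | cons x l =>
      cases l with
      | nil => simp at hlen
      | cons y rest => exact ⟨x, y, rest, rfl⟩

lemma corridor_force {c : List V} (hc : IsCorridor A s t c) {q : List V}
    (hq : IsPath A s t q) {e a : V × V} (he : e ∈ pathEdges c) (heq : e ∈ pathEdges q)
    (ha : a ∈ pathEdges c) : a ∈ pathEdges q := by
  obtain ⟨x, y, rest, rfl⟩ := corridor_destruct hc
  have hint := hc.2.2.1
  have hfirst : (x, y) ∈ pathEdges q :=
    prop_bwd hc.2.1 hint hq (path_edges_red hq) e he heq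
  exact all_fwd hc.2.1 hint hq (path_edges_red hq) hfirst a ha

lemma corridor_nodup (hA : Acyclic A) {c : List V} (hc : IsCorridor A s t c) : c.Nodup :=
  chain_nodup_of_acyclic hA (chain_imp_A hc.2.1)

lemma corridor_head_alt_avoid {c : List V} (hc : IsCorridor A s t c) {x y : V} {rest : List V}
    (hce : c = x :: y :: rest) {z : V} (hzy : z ≠ y) {ρ : List V} (hρ : IsPath A s t ρ)
    (hxz : (x, z) ∈ pathEdges ρ) {a : V × V} (ha : a ∈ pathEdges c) : a ∉ pathEdges ρ := by
  intro haρ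
  subst hce
  have h1 : (x, y) ∈ pathEdges ρ :=
    prop_bwd hc.2.1 hc.2.2.1 hρ (path_edges_red hρ) a ha haρ
  exact hzy (edge_tail_unique hρ.2.2.2 hxz h1)

lemma corridor_last_edge (hA : Acyclic A) {c : List V} (hc : IsCorridor A s t c) :
    ∃ w0 z0, c.getLast? = some z0 ∧ (w0, z0) ∈ pathEdges c := by
  obtain ⟨x, y, rest, rfl⟩ := corridor_destruct hc
  have hlast : (x :: y :: rest).getLast? = (y :: rest).getLast? := List.getLast?_cons_cons ..
  obtain ⟨hne, hlasteq⟩ : ∃ h, (y :: rest).getLast? = some ((y :: rest).getLast h) :=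
    ⟨by simp, List.getLast?_eq_getLast_of_ne_nil (by simp)⟩
  set z0 := (y :: rest).getLast (by simp) with hz0
  have hz0mem : z0 ∈ y :: rest := List.getLast_mem _
  have hz0x : z0 ≠ x := by
    intro h
    exact (List.nodup_cons.mp (corridor_nodup hA hc)).1 (h ▸ hz0mem)
  obtain ⟨w0, hw0⟩ := exists_in_edge (p := x :: y :: rest) rfl
    (List.mem_cons_of_mem _ hz0mem) hz0x
  exact ⟨w0, z0, by rw [hlast, hlasteq], hw0⟩

lemma corridor_last_alt_avoid (hA : Acyclic A) {c : List V} (hc : IsCorridor A s t c)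
    {z0 w0 : V} (hlast : c.getLast? = some z0) (hw0 : (w0, z0) ∈ pathEdges c)
    {u : V} (hu : u ≠ w0) {ρ : List V} (hρ : IsPath A s t ρ) (huz : (u, z0) ∈ pathEdges ρ)
    {a : V × V} (ha : a ∈ pathEdges c) : a ∉ pathEdges ρ := by
  intro haρ
  obtain ⟨x, y, rest, rfl⟩ := corridor_destruct hc
  obtain ⟨w, hwρ, hwc⟩ :=
    prop_fwd hc.2.1 hc.2.2.1 hρ (path_edges_red hρ) hlast a ha haρ
  have h1 : w = w0 := edge_head_unique (corridor_nodup hA hc) hwc hw0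
  have h2 : w = u := edge_head_unique hρ.2.2.2 hwρ huz
  exact hu (h2 ▸ h1)

lemma lmap_decomp {l : ((V × V) → ℝ) →L[ℝ] ℝ} {Q : Finset (List V)} {lam : List V → ℝ}
    {x : (V × V) → ℝ} (heq : x = ∑ p ∈ Q, lam p • chi p) :
    l x = ∑ p ∈ Q, lam p * l (chi p) := by
  rw [heq, map_sum]
  refine Finset.sum_congr rfl (fun p _ => ?_)
  rw [map_smul, smul_eq_mul]

lemma flow_lmap_le (hA : Acyclic A) {x : (V × V) → ℝ} (hx : IsFlow A s t x)
    {l : ((V × V) → ℝ) →L[ℝ] ℝ} {M : ℝ}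
    (hM : ∀ p, IsPath A s t p → l (chi p) ≤ M) : l x ≤ M := by
  obtain ⟨Q, lam, hQ, hpos, hsum, heq⟩ := flow_decomp hA hx
  rw [lmap_decomp heq]
  calc ∑ p ∈ Q, lam p * l (chi p) ≤ ∑ p ∈ Q, lam p * M := by
        refine Finset.sum_le_sum (fun p hp => ?_)
        exact mul_le_mul_of_nonneg_left (hM p (hQ p hp)) (hpos p hp).le
    _ = M := by rw [← Finset.sum_mul, hsum, one_mul]

lemma decomp_at_max (hA : Acyclic A) {x : (V × V) → ℝ} (hx : IsFlow A s t x)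
    {l : ((V × V) → ℝ) →L[ℝ] ℝ} {M : ℝ}
    (hM : ∀ p, IsPath A s t p → l (chi p) ≤ M) (hxM : l x = M) :
    ∃ (Q : Finset (List V)) (lam : List V → ℝ),
      (∀ p ∈ Q, IsPath A s t p) ∧ (∀ p ∈ Q, 0 < lam p) ∧
      ∑ p ∈ Q, lam p = 1 ∧ x = ∑ p ∈ Q, lam p • chi p ∧
      ∀ p ∈ Q, l (chi p) = M := by
  obtain ⟨Q, lam, hQ, hpos, hsum, heq⟩ := flow_decomp hA hx
  refine ⟨Q, lam, hQ, hpos, hsum, heq, ?_⟩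
  have hz : ∑ p ∈ Q, lam p * (M - l (chi p)) = 0 := by
    have : ∑ p ∈ Q, lam p * (M - l (chi p))
        = (∑ p ∈ Q, lam p * M) - ∑ p ∈ Q, lam p * l (chi p) := by
      rw [← Finset.sum_sub_distrib]
      exact Finset.sum_congr rfl (fun p _ => by ring)
    rw [this, ← Finset.sum_mul, hsum, one_mul, ← lmap_decomp heq, hxM, sub_self]
  have hnn : ∀ p ∈ Q, 0 ≤ lam p * (M - l (chi p)) := fun p hp =>
    mul_nonneg (hpos p hp).le (by linarith [hM p (hQ p hp)])
  have := (Finset.sum_eq_zero_iff_of_nonneg hnn).mp hz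
  intro p hp
  have h1 := this p hp
  have h2 := hpos p hp
  have h3 : M - l (chi p) = 0 := by
    rcases mul_eq_zero.mp h1 with h' | h'
    · linarith
    · exact h'
  linarith

end Part8

section Part9
variable {A : Finset (V × V)} {s t : V}

lemma corridor_last_mem {c : List V} {u1 u2 : V} {rest : List V} (hce : c = u1 :: u2 :: rest)
    {z0 : V} (hlast : c.getLast? = some z0) : z0 ∈ u2 :: rest := by
  subst hce
  rw [List.getLast?_cons_cons] at hlast
  obtain ⟨hne, hl2⟩ := List.mem_getLast?_eq_getLast (show z0 ∈ (u2 :: rest).getLast? from hlast ▸ rfl)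
  exact hl2 ▸ List.getLast_mem hne

lemma split_at_corridor (hA : Acyclic A) {c : List V} (hc : IsCorridor A s t c)
    {u1 u2 : V} {rest : List V} (hce : c = u1 :: u2 :: rest)
    {z0 w0 : V} (hlast : c.getLast? = some z0) (hw0 : (w0, z0) ∈ pathEdges c)
    {r : List V} (hr : IsPath A s t r) {a : V × V} (hac : a ∈ pathEdges c)
    (har : a ∈ pathEdges r) :
    ∃ r1 rM rB, IsPath A s u1 r1 ∧ IsPath A u1 z0 rM ∧ IsPath A z0 t rB ∧
      chi r = chi r1 + chi rM + chi rB ∧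
      a ∉ pathEdges r1 ∧ a ∉ pathEdges rB ∧ rM = c := by
  have hcnodup := corridor_nodup hA hc
  have hz0mem : z0 ∈ u2 :: rest := corridor_last_mem hce hlast
  have hz0u1 : z0 ≠ u1 := by
    intro h
    rw [hce, List.nodup_cons] at hcnodup
    exact hcnodup.1 (h ▸ hz0mem)
  have hu1z0rtg : Relation.ReflTransGen (fun a b => (a, b) ∈ A) u1 z0 := by
    refine chain'_rtg (chain_imp_A hc.2.1) ?_ ?_
    · rw [hce]; rfl
    · rw [hce]; exact List.mem_cons_of_mem _ hz0mem
  have he1c : (u1, u2) ∈ pathEdges c := by rw [hce]; simp [pathEdges_cons₂]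
  have he1r : (u1, u2) ∈ pathEdges r := corridor_force hc hr hac har he1c
  have hw0r : (w0, z0) ∈ pathEdges r := corridor_force hc hr hac har hw0
  -- split r at u1
  obtain ⟨r1, r2, hr1, hr2, hrsplit, hredges⟩ := path_split hr (edge_fst_mem he1r)
  have hrEnodup : (pathEdges r1 ++ pathEdges r2).Nodup := by
    rw [← hredges]; exact pathEdges_nodup hr.2.2.2
  have he1r2 : (u1, u2) ∈ pathEdges r2 := by
    rcases List.mem_append.mp (hredges ▸ he1r) with h' | h'
    · exact absurd h' (fun hh => last_no_out hr1.2.2.2 hr1.2.2.1 hh)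
    · exact h'
  have hw0r2 : (w0, z0) ∈ pathEdges r2 := by
    rcases List.mem_append.mp (hredges ▸ hw0r) with h' | h'
    · exfalso
      have hz0r1 : z0 ∈ r1 := edge_snd_mem h'
      have h1 : Relation.ReflTransGen (fun a b => (a, b) ∈ A) z0 u1 := path_rtg_last hr1 hz0r1
      exact hA u1 (Relation.TransGen.trans_left (rtg_ne_tg hu1z0rtg (Ne.symm hz0u1)) h1)
    · exact h'
  -- split r2 at z0
  obtain ⟨rM, rB, hrM, hrB, hr2split, hr2edges⟩ := path_split hr2 (edge_snd_mem hw0r2)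
  have hr2Enodup : (pathEdges rM ++ pathEdges rB).Nodup := by
    rw [← hr2edges]; exact pathEdges_nodup hr2.2.2.2
  have hw0rM : (w0, z0) ∈ pathEdges rM := by
    rcases List.mem_append.mp (hr2edges ▸ hw0r2) with h' | h'
    · exact h'
    · exact absurd h' (fun hh => head_no_in hrB.2.2.2 hrB.2.1 hh)
  have he1rM : (u1, u2) ∈ pathEdges rM := by
    rcases List.mem_append.mp (hr2edges ▸ he1r2) with h' | h'
    · exact h'
    · exfalso
      have hu1rB : u1 ∈ rB := edge_fst_mem h'
      have h1 : Relation.ReflTransGen (fun a b => (a, b) ∈ A) z0 u1 := path_rtg_head hrB hu1rB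
      exact hA u1 (Relation.TransGen.trans_left (rtg_ne_tg hu1z0rtg (Ne.symm hz0u1)) h1)
  -- rM = c
  have hsubM : ∀ e ∈ pathEdges rM, e ∈ redArcs A s t := by
    intro e he
    refine path_edges_red hr e ?_
    rw [hredges, List.mem_append, hr2edges, List.mem_append]
    exact Or.inr (Or.inl he)
  have hrMc : rM = c := by
    rw [hce]
    refine path_eq_chain hA (hce ▸ hc.2.1) ?_ (hce ▸ hlast) ?_ hsubM he1rM
    · have := hc.2.2.1
      rw [hce] at this
      exact this
    · exact hrM
  have hacM : a ∈ pathEdges rM := by rw [hrMc]; exact hac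
  have har1 : a ∉ pathEdges r1 := by
    intro h'
    have : a ∈ pathEdges r2 := by
      rw [hr2edges, List.mem_append]; exact Or.inl hacM
    exact (List.disjoint_of_nodup_append hrEnodup) h' this
  have harB : a ∉ pathEdges rB :=
    fun h' => (List.disjoint_of_nodup_append hr2Enodup) hacM h'
  refine ⟨r1, rM, rB, hr1, hrM, hrB, ?_, har1, harB, hrMc⟩
  have h1 : chi r = chi r1 + chi r2 := chi_add_of_split hr.2.2.2 hredges
  have h2 : chi r2 = chi rM + chi rB := chi_add_of_split hr2.2.2.2 hr2edges
  rw [h1, h2, add_assoc]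

end Part9

section Part10
variable {A : Finset (V × V)} {s t : V}

lemma mem_flowPolytope {x : (V × V) → ℝ} : x ∈ flowPolytope A s t ↔ IsFlow A s t x := Iff.rfl

lemma main_good (hA : Acyclic A) {a : V × V} (ha : a ∈ redArcs A s t)
    (hg : IsGoodArc A s t a) :
    IsFacetOf (flowPolytope A s t) {x ∈ flowPolytope A s t | x a = 0} := by
  obtain ⟨c, hgc, hac⟩ := hg
  obtain ⟨hc, hHd, hLt⟩ := hgc
  obtain ⟨u1, u2, rest, hce⟩ := corridor_destruct hc
  have hst : s ≠ t := redArcs_st ha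
  have hchain := hc.2.1
  have he1c : (u1, u2) ∈ pathEdges c := by rw [hce]; simp [pathEdges_cons₂]
  have he1red : (u1, u2) ∈ redArcs A s t := chain'_pair hchain he1c
  obtain ⟨w0, z0, hlast, hw0⟩ := corridor_last_edge hA hc
  have hw0red : (w0, z0) ∈ redArcs A s t := chain'_pair hchain hw0
  have hdp : 2 ≤ dplus A s t u1 := hHd u1 (by rw [hce]; rfl)
  have hdm : 2 ≤ dminus A s t z0 := hLt z0 hlast
  obtain ⟨eh, hehred, heh1, hehne⟩ := dplus_two hdp he1red rfl
  have hzne : eh.2 ≠ u2 := by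
    intro h
    exact hehne (Prod.ext heh1 h)
  have hehe : eh = (u1, eh.2) := by
    rw [show eh = (eh.1, eh.2) from rfl, heh1]
  obtain ⟨ρ, hρ, hρe⟩ := mem_redArcs_iff.mp hehred
  have hρe' : (u1, eh.2) ∈ pathEdges ρ := hehe ▸ hρe
  have haρ : a ∉ pathEdges ρ := corridor_head_alt_avoid hc hce hzne hρ hρe' hac
  obtain ⟨et, hetred, het2, hetne⟩ := dminus_two hdm hw0red rfl
  have hune : et.1 ≠ w0 := fun h => hetne (Prod.ext h het2)
  have hete : et = (et.1, z0) := by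
    rw [show et = (et.1, et.2) from rfl, het2]
  obtain ⟨σ, hσ, hσe⟩ := mem_redArcs_iff.mp hetred
  have hσe' : (et.1, z0) ∈ pathEdges σ := hete ▸ hσe
  have haσ : a ∉ pathEdges σ := corridor_last_alt_avoid hA hc hlast hw0 hune hσ hσe' hac
  have hρflow : chi ρ ∈ flowPolytope A s t := chi_flow hρ hst
  have hρa0 : chi ρ a = 0 := by rw [chi, if_neg haρ]
  have hρF : chi ρ ∈ {x ∈ flowPolytope A s t | x a = 0} := ⟨hρflow, hρa0⟩
  obtain ⟨pa, hpa, hapa⟩ := mem_redArcs_iff.mp ha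
  have hpaS : chi pa ∈ flowPolytope A s t := chi_flow hpa hst
  have hpaa : chi pa a = 1 := by rw [chi, if_pos hapa]
  refine ⟨exposed_coord_zero ⟨chi ρ, hρflow, hρa0⟩, ?_, ?_⟩
  · intro hFS
    have hmem : chi pa ∈ {x ∈ flowPolytope A s t | x a = 0} := by rw [hFS]; exact hpaS
    have h2 := hmem.2
    rw [hpaa] at h2
    norm_num at h2
  · intro G hGexp hGneS hFG
    rcases Set.eq_empty_or_nonempty G with hGe | hGne
    · exact absurd (hFG hρF) (hGe ▸ Set.notMem_empty _)
    obtain ⟨l, hGeq⟩ := hGexp hGne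
    have hPne : (pathFinset A s t).Nonempty := ⟨pa, mem_pathFinset.mpr hpa⟩
    obtain ⟨pm, hpmP, hpmax⟩ := Finset.exists_max_image (pathFinset A s t)
      (fun p => l (chi p)) hPne
    set M := l (chi pm) with hMdef
    have hpm : IsPath A s t pm := mem_pathFinset.mp hpmP
    have hpmM : l (chi pm) = M := rfl
    have hMle : ∀ p, IsPath A s t p → l (chi p) ≤ M := fun p hp =>
      hpmax p (mem_pathFinset.mpr hp)
    have hMub : ∀ x ∈ flowPolytope A s t, l x ≤ M := fun x hx => flow_lmap_le hA hx hMle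
    have hGchar : ∀ x, x ∈ G ↔ x ∈ flowPolytope A s t ∧ l x = M := by
      intro x
      rw [hGeq]
      constructor
      · rintro ⟨hx, hmax⟩
        refine ⟨hx, le_antisymm (hMub x hx) ?_⟩
        rw [← hpmM]
        exact hmax _ (chi_flow hpm hst)
      · rintro ⟨hx, hxM⟩
        exact ⟨hx, fun y hy => by rw [hxM]; exact hMub y hy⟩
    have havoidM : ∀ p, IsPath A s t p → a ∉ pathEdges p → l (chi p) = M := by
      intro p hp hap
      have : chi p ∈ G := hFG ⟨chi_flow hp hst, by rw [chi, if_neg hap]⟩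
      exact ((hGchar _).mp this).2
    by_cases hQa : ∃ q, IsPath A s t q ∧ a ∈ pathEdges q ∧ l (chi q) = M
    · exfalso
      obtain ⟨qq, hqq, haqq, hqqM⟩ := hQa
      have hallM : ∀ r, IsPath A s t r → l (chi r) = M := by
        intro r hr
        by_cases har : a ∈ pathEdges r
        · obtain ⟨r1, rM, rB, hr1, hrM, hrB, hrchi, har1, harB, hrMc⟩ :=
            split_at_corridor hA hc hce hlast hw0 hr hac har
          obtain ⟨q1, qM, qB, hq1, hqM, hqB, hqchi, haq1, haqB, hqMc⟩ :=
            split_at_corridor hA hc hce hlast hw0 hqq hac haqq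
          have hu1ρ : u1 ∈ ρ := edge_fst_mem hρe'
          obtain ⟨ρ1, ρ2, hρ1, hρ2, hρsplit, hρedges⟩ := path_split hρ hu1ρ
          have haρ2 : a ∉ pathEdges ρ2 := fun h' =>
            haρ (by rw [hρedges, List.mem_append]; exact Or.inr h')
          have hz0σ : z0 ∈ σ := edge_snd_mem hσe'
          obtain ⟨σ1, σB, hσ1, hσB, hσsplit, hσedges⟩ := path_split hσ hz0σ
          have haσ1 : a ∉ pathEdges σ1 := fun h' =>
            haσ (by rw [hσedges, List.mem_append]; exact Or.inl h')
          have key : ∀ {P1 P2 : List V} {v : V}, IsPath A s v P1 → IsPath A v t P2 →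
              a ∉ pathEdges P1 → a ∉ pathEdges P2 →
              l (chi P1) + l (chi P2) = M := by
            intro P1 P2 v h1 h2 hna1 hna2
            obtain ⟨hpath, hedges⟩ := path_append hA h1 h2
            have hchiw : chi (P1 ++ P2.tail) = chi P1 + chi P2 :=
              chi_add_of_split hpath.2.2.2 hedges
            have hna : a ∉ pathEdges (P1 ++ P2.tail) := by
              intro h'
              rcases List.mem_append.mp (hedges ▸ h') with h'' | h''
              · exact hna1 h''
              · exact hna2 h''
            have := havoidM _ hpath hna
            rw [hchiw, map_add] at this
            exact this
          have hM1 : l (chi r1) + l (chi ρ2) = M := key hr1 hρ2 har1 haρ2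
          have hM1' : l (chi q1) + l (chi ρ2) = M := key hq1 hρ2 haq1 haρ2
          have hM2 : l (chi σ1) + l (chi rB) = M := key hσ1 hrB haσ1 harB
          have hM2' : l (chi σ1) + l (chi qB) = M := key hσ1 hqB haσ1 haqB
          have hmid : l (chi rM) = l (chi qM) := by rw [hrMc, hqMc]
          have hqqexp : l (chi q1) + l (chi qM) + l (chi qB) = M := by
            rw [← map_add, ← map_add, ← hqchi]
            exact hqqM
          rw [hrchi, map_add, map_add]
          linarith
        · exact havoidM r hr har
      apply hGneS
      rw [hGeq]
      apply Set.Subset.antisymm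
      · intro x hx; exact hx.1
      · intro x hx
        have hxM : l x = M := by
          obtain ⟨Q, lam, hQ, hpos, hsum, heq⟩ := flow_decomp hA hx
          rw [lmap_decomp heq]
          rw [Finset.sum_congr rfl (fun p hp => by rw [hallM p (hQ p hp)]),
            ← Finset.sum_mul, hsum, one_mul]
        exact ⟨hx, fun y hy => by rw [hxM]; exact hMub y hy⟩
    · push_neg at hQa
      refine Set.Subset.antisymm ?_ hFG
      intro x hxG
      obtain ⟨hxS, hxM⟩ := (hGchar x).mp hxG
      obtain ⟨Q, lam, hQ, hpos, hsum, heq, hQmax⟩ := decomp_at_max hA hxS hMle hxM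
      refine ⟨hxS, ?_⟩
      rw [flow_apply_decomp heq]
      refine Finset.sum_eq_zero (fun p hp => ?_)
      have hap : a ∉ pathEdges p := fun h' => hQa p (hQ p hp) h' (hQmax p hp)
      rw [chi, if_neg hap]
      ring

end Part10

section Part11
variable {A : Finset (V × V)} {s t : V}

lemma main_unique (hA : Acyclic A) {a : V × V} (ha : a ∈ redArcs A s t)
    (hu : ∃! p : List V, IsPath A s t p) :
    IsFacetOf (flowPolytope A s t) {x ∈ flowPolytope A s t | x a = 0} := by
  obtain ⟨p0, hp0, huniq⟩ := hu
  have hst : s ≠ t := redArcs_st ha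
  obtain ⟨pa, hpa, hapa⟩ := mem_redArcs_iff.mp ha
  have hpp : pa = p0 := huniq pa hpa
  subst hpp
  have hSsub : flowPolytope A s t = {chi pa} := by
    ext x
    simp only [Set.mem_singleton_iff]
    constructor
    · intro hx
      obtain ⟨Q, lam, hQ, hpos, hsum, heq⟩ := flow_decomp hA hx
      have hQsub : ∀ q ∈ Q, q = pa := fun q hq => huniq q (hQ q hq)
      have hQne : Q.Nonempty := by
        by_contra h
        rw [Finset.not_nonempty_iff_eq_empty] at h
        rw [h, Finset.sum_empty] at hsum
        norm_num at hsum
      obtain ⟨q, hq⟩ := hQne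
      have hqpa : q = pa := hQsub q hq
      have hQeq : Q = {pa} := by
        refine Finset.Subset.antisymm (fun q hq => Finset.mem_singleton.mpr (hQsub q hq)) ?_
        rw [Finset.singleton_subset_iff, ← hqpa]
        exact hq
      rw [hQeq, Finset.sum_singleton] at hsum heq
      rw [heq, hsum, one_smul]
    · intro hx
      rw [hx]
      exact chi_flow hpa hst
  have hpaa : chi pa a = 1 := by rw [chi, if_pos hapa]
  have hF : {x ∈ flowPolytope A s t | x a = 0} = ∅ := by
    ext x
    simp only [Set.mem_sep_iff, Set.mem_empty_iff_false, iff_false, not_and]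
    intro hx hxa
    rw [hSsub, Set.mem_singleton_iff] at hx
    rw [hx, hpaa] at hxa
    norm_num at hxa
  refine ⟨?_, ?_, ?_⟩
  · rw [hF]
    exact isExposed_empty
  · rw [hF, hSsub]
    exact (Set.singleton_ne_empty _).symm
  · intro G hGexp hGne hFG
    rcases Set.eq_empty_or_nonempty G with h | h
    · rw [h, hF]
    · exfalso
      obtain ⟨l, hGeq⟩ := hGexp h
      have hGsub : G ⊆ flowPolytope A s t := by
        rw [hGeq]
        intro x hx
        exact hx.1
      apply hGne
      rw [hSsub]
      refine Set.Subset.antisymm (hSsub ▸ hGsub) ?_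
      intro x hx
      obtain ⟨g, hg⟩ := h
      have hgval : g ∈ ({chi pa} : Set _) := hSsub ▸ hGsub hg
      rw [Set.mem_singleton_iff] at hx hgval
      rw [hx, ← hgval]
      exact hg

lemma main_redarc (hA : Acyclic A) {a : V × V}
    (hfac : IsFacetOf (flowPolytope A s t) {x ∈ flowPolytope A s t | x a = 0}) :
    a ∈ redArcs A s t := by
  by_contra ha
  refine hfac.2.1 ?_
  ext x
  simp only [Set.mem_sep_iff, and_iff_left_iff_imp]
  intro hx
  by_cases haA : a ∈ A
  · exact flow_avoid hA hx (fun p hp hap => ha (edge_mem_redArcs hp hap))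
  · exact hx.1 a haA

lemma main_allpaths (hA : Acyclic A) {a : V × V} (ha : a ∈ redArcs A s t)
    (hall : ∀ p, IsPath A s t p → a ∈ pathEdges p)
    (hnu : ¬ ∃! p : List V, IsPath A s t p)
    (hfac : IsFacetOf (flowPolytope A s t) {x ∈ flowPolytope A s t | x a = 0}) : False := by
  have hst : s ≠ t := redArcs_st ha
  obtain ⟨p0, hp0, _⟩ := mem_redArcs_iff.mp ha
  have h2 : ∃ p1, IsPath A s t p1 ∧ p1 ≠ p0 := by
    by_contra h
    push_neg at h
    exact hnu ⟨p0, hp0, fun q hq => h q hq⟩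
  obtain ⟨p1, hp1, hne⟩ := h2
  have hdiff : ∃ b, b ∈ pathEdges p1 ∧ b ∉ pathEdges p0 := by
    by_contra h
    push_neg at h
    exact hne (path_eq_of_edges_subset hp1 hp0 h)
  obtain ⟨b, hb1, hb0⟩ := hdiff
  have hF : {x ∈ flowPolytope A s t | x a = 0} = ∅ := by
    ext x
    simp only [Set.mem_sep_iff, Set.mem_empty_iff_false, iff_false, not_and]
    intro hx hxa
    rw [flow_all_one hA hx hall] at hxa
    norm_num at hxa
  set l : ((V × V) → ℝ) →L[ℝ] ℝ := ContinuousLinearMap.proj b with hl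
  set G := {x ∈ flowPolytope A s t | ∀ y ∈ flowPolytope A s t, l y ≤ l x} with hG
  have hGexp : IsExposed ℝ (flowPolytope A s t) G := fun _ => ⟨l, rfl⟩
  have hlval : ∀ x : (V × V) → ℝ, l x = x b := fun x => rfl
  have hub : ∀ p, IsPath A s t p → l (chi p) ≤ 1 := by
    intro p hp
    rw [hlval, chi]
    split <;> norm_num
  have hchib1 : l (chi p1) = 1 := by rw [hlval, chi, if_pos hb1]
  have hchib0 : l (chi p0) = 0 := by rw [hlval, chi, if_neg hb0]
  have hmem : chi p1 ∈ G := by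
    refine ⟨chi_flow hp1 hst, fun y hy => ?_⟩
    rw [hchib1]
    exact flow_lmap_le hA hy hub
  have hGneS : G ≠ flowPolytope A s t := by
    intro h
    have : chi p0 ∈ G := by rw [h]; exact chi_flow hp0 hst
    have h1 := this.2 (chi p1) (chi_flow hp1 hst)
    rw [hchib1, hchib0] at h1
    norm_num at h1
  have := hfac.2.2 G hGexp hGneS (by rw [hF]; exact Set.empty_subset G)
  rw [hF] at this
  rw [this] at hmem
  exact Set.notMem_empty _ hmem

end Part11

section Part12
variable {A : Finset (V × V)} {s t : V}

lemma main_notgood (hA : Acyclic A) {a : V × V} (ha : a ∈ redArcs A s t)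
    (hnu : ¬ ∃! p : List V, IsPath A s t p) (hng : ¬ IsGoodArc A s t a)
    (hfac : IsFacetOf (flowPolytope A s t) {x ∈ flowPolytope A s t | x a = 0}) : False := by
  have hst : s ≠ t := redArcs_st ha
  have ha' : (a.1, a.2) ∈ redArcs A s t := ha
  obtain ⟨c, hc, hacc⟩ := corridor_of_arc hA ha'
  have hac : a ∈ pathEdges c := hacc
  obtain ⟨u1, u2, rest, hce⟩ := corridor_destruct hc
  obtain ⟨w0, z0, hlast, hw0⟩ := corridor_last_edge hA hc
  have he1c : (u1, u2) ∈ pathEdges c := by rw [hce]; simp [pathEdges_cons₂]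
  have he1red : (u1, u2) ∈ redArcs A s t := chain'_pair hc.2.1 he1c
  have hw0red : (w0, z0) ∈ redArcs A s t := chain'_pair hc.2.1 hw0
  have hcase : ¬ (2 ≤ dplus A s t u1) ∨ ¬ (2 ≤ dminus A s t z0) := by
    by_contra h
    push_neg at h
    refine hng ⟨c, ⟨hc, ?_, ?_⟩, hac⟩
    · intro h' hh'
      rw [hce] at hh'
      simp only [List.head?_cons, Option.some.injEq] at hh'
      rw [← hh']
      exact h.1
    · intro z hz
      rw [hlast] at hz
      rw [← Option.some.inj hz]
      exact h.2
  have hdpu1 : 0 < dplus A s t u1 := dplus_pos he1red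
  have hdmz0 : 0 < dminus A s t z0 := dminus_pos hw0red
  have hheadc := hc.2.2.2.1 u1 (by rw [hce]; rfl)
  have hlastc := hc.2.2.2.2 z0 hlast
  rcases hcase with hA1 | hB1
  · have hdp1 : dplus A s t u1 = 1 := by omega
    have hu1t : u1 ≠ t := by
      intro h
      rw [h, dplus_t] at hdp1
      omega
    have hvisit : ∀ p, IsPath A s t p → u1 ∈ p → a ∈ pathEdges p := by
      intro p hp hu1p
      obtain ⟨w', hw'⟩ := exists_out_edge hp.2.2.1 hu1p hu1t
      have heq : (u1, w') = (u1, u2) :=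
        dplus_one_unique hdp1 (edge_mem_redArcs hp hw') rfl he1red rfl
      exact corridor_force hc hp he1c (heq ▸ hw') hac
    by_cases hdm0 : dminus A s t u1 = 0
    · have hu1s : u1 = s := by
        by_contra h
        obtain ⟨p, hp, hep⟩ := mem_redArcs_iff.mp he1red
        obtain ⟨uu, huu⟩ := exists_in_edge hp.2.1 (edge_fst_mem hep) h
        have := dminus_pos (edge_mem_redArcs hp huu)
        simp only at this
        omega
      have hall : ∀ p, IsPath A s t p → a ∈ pathEdges p := fun p hp =>
        hvisit p hp (hu1s ▸ hp.head_mem)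
      exact main_allpaths hA ha hall hnu hfac
    · have hdmu1 : dminus A s t u1 ≠ 1 := by
        rcases hheadc with h' | h'
        · exact h'
        · exact absurd hdp1 h'
      have hdm2 : 2 ≤ dminus A s t u1 := by omega
      have hpos0 : 0 < ((redArcs A s t).filter fun e => e.2 = u1).card := by
        have : 0 < dminus A s t u1 := by omega
        exact this
      obtain ⟨b, hbmem⟩ := Finset.card_pos.mp hpos0
      obtain ⟨hbred0, hb2⟩ := Finset.mem_filter.mp hbmem
      have hbred : (b.1, u1) ∈ redArcs A s t := by rw [← hb2]; exact hbred0
      set b1 := b.1 with hb1def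
      obtain ⟨b', hb'red0, hb'2, hb'ne0⟩ := dminus_two (e := (b1, u1)) hdm2 hbred rfl
      have hb'red : (b'.1, u1) ∈ redArcs A s t := by rw [← hb'2]; exact hb'red0
      set c1 := b'.1 with hc1def
      have hb1c1 : c1 ≠ b1 := by
        intro h
        apply hb'ne0
        rw [show b' = (b'.1, b'.2) from rfl, hb'2, ← hc1def, h]
      have himpb : ∀ p, IsPath A s t p → (b1, u1) ∈ pathEdges p → a ∈ pathEdges p :=
        fun p hp hbp => hvisit p hp (edge_snd_mem hbp)
      obtain ⟨p', hp', hbp'⟩ := mem_redArcs_iff.mp hb'red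
      have hap' : a ∈ pathEdges p' := hvisit p' hp' (edge_snd_mem hbp')
      have hbnotp' : (b1, u1) ∉ pathEdges p' := by
        intro h
        exact hb1c1 (edge_head_unique hp'.2.2.2 hbp' h)
      obtain ⟨pb, hpb, hbpb⟩ := mem_redArcs_iff.mp hbred
      set G := {x ∈ flowPolytope A s t | x (b1, u1) = 0} with hGdef
      have hp'G : chi p' ∈ G := ⟨chi_flow hp' hst, by rw [chi, if_neg hbnotp']⟩
      have hGexp : IsExposed ℝ (flowPolytope A s t) G :=
        exposed_coord_zero ⟨chi p', chi_flow hp' hst, by rw [chi, if_neg hbnotp']⟩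
      have hGneS : G ≠ flowPolytope A s t := by
        intro h
        have hmem : chi pb ∈ G := by rw [h]; exact chi_flow hpb hst
        have := hmem.2
        rw [chi, if_pos hbpb] at this
        norm_num at this
      have hFG : {x ∈ flowPolytope A s t | x a = 0} ⊆ G := by
        rintro x ⟨hx, hxa⟩
        exact ⟨hx, flow_force hA hx himpb hxa⟩
      have hGF := hfac.2.2 G hGexp hGneS hFG
      rw [hGF] at hp'G
      have := hp'G.2
      rw [chi, if_pos hap'] at this
      norm_num at this
  · have hdm1 : dminus A s t z0 = 1 := by omega
    have hz0s : z0 ≠ s := by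
      intro h
      rw [h, dminus_s] at hdm1
      omega
    have hvisit : ∀ p, IsPath A s t p → z0 ∈ p → a ∈ pathEdges p := by
      intro p hp hz0p
      obtain ⟨y', hy'⟩ := exists_in_edge hp.2.1 hz0p hz0s
      have heq : (y', z0) = (w0, z0) :=
        dminus_one_unique hdm1 (edge_mem_redArcs hp hy') rfl hw0red rfl
      exact corridor_force hc hp hw0 (heq ▸ hy') hac
    by_cases hdp0 : dplus A s t z0 = 0
    · have hz0t : z0 = t := by
        by_contra h
        obtain ⟨p, hp, hep⟩ := mem_redArcs_iff.mp hw0red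
        obtain ⟨ww, hww⟩ := exists_out_edge hp.2.2.1 (edge_snd_mem hep) h
        have := dplus_pos (edge_mem_redArcs hp hww)
        simp only at this
        omega
      have hall : ∀ p, IsPath A s t p → a ∈ pathEdges p := fun p hp =>
        hvisit p hp (hz0t ▸ hp.last_mem)
      exact main_allpaths hA ha hall hnu hfac
    · have hdpz0 : dplus A s t z0 ≠ 1 := by
        rcases hlastc with h' | h'
        · exact absurd hdm1 h'
        · exact h'
      have hdp2 : 2 ≤ dplus A s t z0 := by omega
      have hpos0 : 0 < ((redArcs A s t).filter fun e => e.1 = z0).card := by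
        have : 0 < dplus A s t z0 := by omega
        exact this
      obtain ⟨b, hbmem⟩ := Finset.card_pos.mp hpos0
      obtain ⟨hbred0, hb1⟩ := Finset.mem_filter.mp hbmem
      have hbred : (z0, b.2) ∈ redArcs A s t := by rw [← hb1]; exact hbred0
      set b2 := b.2 with hb2def
      obtain ⟨b', hb'red0, hb'1, hb'ne0⟩ := dplus_two (e := (z0, b2)) hdp2 hbred rfl
      have hb'red : (z0, b'.2) ∈ redArcs A s t := by rw [← hb'1]; exact hb'red0
      set c2 := b'.2 with hc2def
      have hb2c2 : c2 ≠ b2 := by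
        intro h
        apply hb'ne0
        rw [show b' = (b'.1, b'.2) from rfl, hb'1, ← hc2def, h]
      have himpb : ∀ p, IsPath A s t p → (z0, b2) ∈ pathEdges p → a ∈ pathEdges p :=
        fun p hp hbp => hvisit p hp (edge_fst_mem hbp)
      obtain ⟨p', hp', hbp'⟩ := mem_redArcs_iff.mp hb'red
      have hap' : a ∈ pathEdges p' := hvisit p' hp' (edge_fst_mem hbp')
      have hbnotp' : (z0, b2) ∉ pathEdges p' := by
        intro h
        exact hb2c2 (edge_tail_unique hp'.2.2.2 hbp' h)
      obtain ⟨pb, hpb, hbpb⟩ := mem_redArcs_iff.mp hbred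
      set G := {x ∈ flowPolytope A s t | x (z0, b2) = 0} with hGdef
      have hp'G : chi p' ∈ G := ⟨chi_flow hp' hst, by rw [chi, if_neg hbnotp']⟩
      have hGexp : IsExposed ℝ (flowPolytope A s t) G :=
        exposed_coord_zero ⟨chi p', chi_flow hp' hst, by rw [chi, if_neg hbnotp']⟩
      have hGneS : G ≠ flowPolytope A s t := by
        intro h
        have hmem : chi pb ∈ G := by rw [h]; exact chi_flow hpb hst
        have := hmem.2
        rw [chi, if_pos hbpb] at this
        norm_num at this
      have hFG : {x ∈ flowPolytope A s t | x a = 0} ⊆ G := by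
        rintro x ⟨hx, hxa⟩
        exact ⟨hx, flow_force hA hx himpb hxa⟩
      have hGF := hfac.2.2 G hGexp hGneS hFG
      rw [hGF] at hp'G
      have := hp'G.2
      rw [chi, if_pos hap'] at this
      norm_num at this

end Part12

/-- `x(a) ≥ 0` defines a facet of the flow polytope iff `a` lies on some `s`–`t` path and
moreover either the network has exactly one `s`–`t` path, or the arc `a` is good. -/
theorem stmt14 (A : Finset (V × V)) (s t : V) (hA : Acyclic A) (a : V × V) :
    IsFacetOf (flowPolytope A s t) {x ∈ flowPolytope A s t | x a = 0} ↔
      (a ∈ redArcs A s t ∧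
        ((∃! p : List V, IsPath A s t p) ∨ IsGoodArc A s t a)) := by
  constructor
  · intro hfac
    have ha : a ∈ redArcs A s t := main_redarc hA hfac
    refine ⟨ha, ?_⟩
    by_cases hu : ∃! p : List V, IsPath A s t p
    · exact Or.inl hu
    · refine Or.inr ?_
      by_contra hng
      exact main_notgood hA ha hu hng hfac
  · rintro ⟨ha, hcase | hcase⟩
    · exact main_unique hA ha hcase
    · exact main_good hA ha hcase
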